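/- arXiv:1110.5308 — 5 statements merged into one kernel-verified Lean document; each statement's English description precedes it below -/
import Mathlib

section
/- Let p > 2 be a prime. Then H_{(p-1)/2}(2) + (7/6)·p·H_{(p-1)/2}(3) + (5/8)·p²·H_{(p-1)/2}(4) ≡ 0 (mod p⁴). -/
open Finset

/-- `x ≡ y (mod p^m)` for rationals: the `p`-adic valuation of `x - y` is at least `m`
(with the convention that `x = y` always satisfies the congruence). -/
def pcong (p m : ℕ) (x y : ℚ) : Prop := x = y ∨ (m : ℤ) ≤ padicValRat p (x - y)

/-- Harmonic sum `H_n(a) = ∑_{k=1}^n 1/k^a`. -/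
def Hs (n a : ℕ) : ℚ := ∑ k ∈ Finset.Icc 1 n, 1 / (k : ℚ) ^ a

/-- Numerator of the per-term remainder. -/
def nkk (p k : ℕ) : ℤ :=
  192*(5*(k:ℤ)-4*p)*((p:ℤ)-k)*((p:ℤ)-2*k)^3 - 12*(5*(k:ℤ)-2*p)*((p:ℤ)-k)^3*((p:ℤ)-2*k)
  + 128*(10*(k:ℤ)^2-15*(p:ℤ)*k+6*(p:ℤ)^2)*((p:ℤ)-2*k)^3
  - 8*(20*(k:ℤ)^2-15*(p:ℤ)*k+3*(p:ℤ)^2)*((p:ℤ)-k)^3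

/-- Denominator of the per-term remainder. -/
def dkk (p k : ℕ) : ℕ := 288*k^5*(p-k)^3*(p-2*k)^3

/-- The auxiliary weight function. -/
def fff (p j : ℕ) : ℚ := (2/3)*(1/(j:ℚ)^2) + (4/9)*(p:ℚ)*(1/(j:ℚ)^3)

lemma sum_Icc_split (f : ℕ → ℚ) (n : ℕ) :
    ∑ j ∈ Icc 1 (2*n), f j = (∑ j ∈ Icc 1 n, f j) + ∑ j ∈ Icc (n+1) (2*n), f j := by
  rw [show (1:ℕ) = 0 + 1 from rfl, Finset.Icc_add_one_left_eq_Ioc, Finset.Icc_add_one_left_eq_Ioc, zero_add, Finset.Icc_add_one_left_eq_Ioc,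
    Finset.sum_Ioc_consecutive f (Nat.zero_le n) (by omega)]

lemma sum_Icc_reflect (f : ℕ → ℚ) (n : ℕ) :
    ∑ j ∈ Icc (n+1) (2*n), f j = ∑ k ∈ Icc 1 n, f (2*n+1-k) := by
  refine Finset.sum_nbij' (fun j => 2*n+1-j) (fun k => 2*n+1-k) ?_ ?_ ?_ ?_ ?_ <;>
    intro a ha <;> simp only [Finset.mem_Icc] at ha ⊢ <;> try omega
  have h : 2*n+1-(2*n+1-a) = a := by omega
  rw [h]

lemma sum_Icc_parity (f : ℕ → ℚ) (n : ℕ) :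
    ∑ j ∈ Icc 1 (2*n), f j = ∑ k ∈ Icc 1 n, (f (2*k-1) + f (2*k)) := by
  induction n with
  | zero => simp
  | succ n ih =>
    have h1 : 2*(n+1) = (2*n+1)+1 := by ring
    rw [h1, Finset.sum_Icc_succ_top (by omega), Finset.sum_Icc_succ_top (by omega), ih,
      Finset.sum_Icc_succ_top (by omega)]
    have h2 : 2*(n+1)-1 = 2*n+1 := by omega
    have h3 : 2*(n+1) = 2*n+1+1 := by omega
    rw [h2, h3]
    ring

lemma sum_Icc_odd_reflect (f : ℕ → ℚ) (n : ℕ) :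
    ∑ k ∈ Icc 1 n, f (2*k-1) = ∑ k ∈ Icc 1 n, f (2*n+1-2*k) := by
  refine Finset.sum_nbij' (fun k => n+1-k) (fun k => n+1-k) ?_ ?_ ?_ ?_ ?_ <;>
    intro a ha <;> simp only [Finset.mem_Icc] at ha ⊢ <;> try omega
  have h : 2*n+1-2*(n+1-a) = 2*a-1 := by omega
  rw [h]

/-- Main combinatorial identity. -/
lemma sum_comb (f : ℕ → ℚ) (n : ℕ) :
    ∑ k ∈ Icc 1 n, (f (2*n+1-k) - f (2*n+1-2*k)) = ∑ k ∈ Icc 1 n, (f (2*k) - f k) := by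
  have h1 := sum_Icc_split f n
  have h2 := sum_Icc_reflect f n
  have h3 := sum_Icc_parity f n
  have h4 := sum_Icc_odd_reflect f n
  rw [Finset.sum_sub_distrib, Finset.sum_sub_distrib, ← h2, ← h4]
  rw [Finset.sum_add_distrib] at h3
  have h5 := h3.symm.trans h1
  linarith

/-- padicValRat of a sum of terms of nonneg valuation. -/
lemma val_sum_nonneg (p : ℕ) [hp : Fact p.Prime] (s : Finset ℕ) (f : ℕ → ℚ)
    (h : ∀ i ∈ s, f i = 0 ∨ 0 ≤ padicValRat p (f i)) :
    (∑ i ∈ s, f i) = 0 ∨ 0 ≤ padicValRat p (∑ i ∈ s, f i) := by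
  classical
  induction s using Finset.induction with
  | empty => left; simp
  | @insert a s' ha ih =>
    rw [Finset.sum_insert ha]
    have hrest := ih (fun i hi => h i (Finset.mem_insert_of_mem hi))
    have hha := h a (Finset.mem_insert_self a s')
    rcases hha with h0 | hva
    · rw [h0, zero_add]; exact hrest
    rcases hrest with h0 | hvs
    · rw [h0, add_zero]; right; exact hva
    by_cases hz : f a + ∑ i ∈ s', f i = 0
    · left; exact hz
    · right
      calc (0:ℤ) ≤ min (padicValRat p (f a)) (padicValRat p (∑ i ∈ s', f i)) :=
            le_min hva hvs
        _ ≤ _ := padicValRat.min_le_padicValRat_add hz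

/-- Per-term analytic identity (remainder form). -/
lemma key1 (p k : ℕ) (hk : 1 ≤ k) (h2k : 2*k < p) :
    ((p:ℚ))^4 * ((nkk p k : ℚ)/(dkk p k : ℚ)) =
      (2/3)*(1/((p:ℚ)-k)^2 - 1/((p:ℚ)-2*k)^2)
      + (4/9)*(p:ℚ)*(1/((p:ℚ)-k)^3 - 1/((p:ℚ)-2*k)^3)
      - (1/2)/(k:ℚ)^2 - (7/9)*(p:ℚ)/(k:ℚ)^3 - (5/8)*(p:ℚ)^2/(k:ℚ)^4 := by
  have hk1 : (1:ℚ) ≤ (k:ℚ) := by exact_mod_cast hk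
  have hK : (k:ℚ) ≠ 0 := by linarith
  have h2kp : 2*(k:ℚ) < (p:ℚ) := by exact_mod_cast h2k
  have hPK : (p:ℚ) - (k:ℚ) ≠ 0 := by nlinarith
  have hP2K : (p:ℚ) - 2*(k:ℚ) ≠ 0 := by nlinarith
  have hd : ((dkk p k : ℕ) : ℚ) = 288*(k:ℚ)^5*((p:ℚ)-(k:ℚ))^3*((p:ℚ)-2*(k:ℚ))^3 := by
    unfold dkk
    push_cast [Nat.cast_sub (show k ≤ p by omega), Nat.cast_sub (show 2*k ≤ p by omega)]
    ring
  have hn : ((nkk p k : ℤ) : ℚ) =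
      192*(5*(k:ℚ)-4*(p:ℚ))*((p:ℚ)-(k:ℚ))*((p:ℚ)-2*(k:ℚ))^3
      - 12*(5*(k:ℚ)-2*(p:ℚ))*((p:ℚ)-(k:ℚ))^3*((p:ℚ)-2*(k:ℚ))
      + 128*(10*(k:ℚ)^2-15*(p:ℚ)*(k:ℚ)+6*(p:ℚ)^2)*((p:ℚ)-2*(k:ℚ))^3
      - 8*(20*(k:ℚ)^2-15*(p:ℚ)*(k:ℚ)+3*(p:ℚ)^2)*((p:ℚ)-(k:ℚ))^3 := by
    unfold nkk; push_cast; ring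
  rw [hd, hn]
  have e1 : ((p:ℚ) - k)^3 ≠ 0 := pow_ne_zero _ hPK
  have e2 : ((p:ℚ) - 2*k)^3 ≠ 0 := pow_ne_zero _ hP2K
  field_simp
  field_simp
  ring

theorem stmt0 (p : ℕ) (hp : p.Prime) (hp2 : 2 < p) :
    pcong p 4 (Hs ((p - 1) / 2) 2 + (7 / 6) * p * Hs ((p - 1) / 2) 3
      + (5 / 8) * p ^ 2 * Hs ((p - 1) / 2) 4) 0 := by
  haveI : Fact p.Prime := ⟨hp⟩
  unfold pcong
  rcases eq_or_ne p 3 with h3 | h3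
  · subst h3
    right
    rw [sub_zero]
    have hval : Hs ((3 - 1) / 2) 2 + (7 / 6) * (3:ℕ) * Hs ((3 - 1) / 2) 3
        + (5 / 8) * (3:ℕ) ^ 2 * Hs ((3 - 1) / 2) 4 = ((3^4 : ℕ) : ℚ) / ((8:ℕ) : ℚ) := by
      norm_num [Hs]
    rw [hval, padicValRat.div (by norm_num) (by norm_num)]
    have h81 : padicValRat 3 ((3^4 : ℕ) : ℚ) = 4 := by
      rw [padicValRat.of_nat, padicValNat.prime_pow]; norm_num
    have h8 : padicValRat 3 ((8 : ℕ) : ℚ) = 0 := by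
      rw [padicValRat.of_nat, padicValNat.eq_zero_of_not_dvd (by decide)]; norm_num
    rw [h81, h8]
    norm_num
  · -- main case : p ≥ 5
    have hodd : ¬ (2 ∣ p) := by
      intro h
      have := (Nat.prime_dvd_prime_iff_eq Nat.prime_two hp).mp h
      omega
    have hp5 : 5 ≤ p := by omega
    set n := (p - 1) / 2 with hndef
    have hpn : p = 2*n + 1 := by omega
    have hpQ : (p:ℚ) = 2*(n:ℚ) + 1 := by exact_mod_cast congrArg (Nat.cast (R := ℚ)) hpn
    have hppos : (0:ℚ) < (p:ℚ) := by positivity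
    -- per-term facts
    have e1 : ∀ k ∈ Icc 1 n, (p:ℚ)^4 * (-((nkk p k : ℚ)/(dkk p k : ℚ))) =
        -(fff p (2*n+1-k) - fff p (2*n+1-2*k))
        + ((1/2)/(k:ℚ)^2 + (7/9)*(p:ℚ)/(k:ℚ)^3 + (5/8)*(p:ℚ)^2/(k:ℚ)^4) := by
      intro k hk
      simp only [Finset.mem_Icc] at hk
      have h2k : 2*k < p := by omega
      have hc1 : ((2*n+1-k : ℕ) : ℚ) = (p:ℚ) - (k:ℚ) := by
        rw [Nat.cast_sub (by omega)]
        push_cast [hpQ]; ring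
      have hc2 : ((2*n+1-2*k : ℕ) : ℚ) = (p:ℚ) - 2*(k:ℚ) := by
        rw [Nat.cast_sub (by omega)]
        push_cast [hpQ]; ring
      rw [mul_neg, key1 p k hk.1 h2k]
      unfold fff
      rw [hc1, hc2]
      ring
    have e2 : ∀ k ∈ Icc 1 n, -(fff p (2*k) - fff p k)
        + ((1/2)/(k:ℚ)^2 + (7/9)*(p:ℚ)/(k:ℚ)^3 + (5/8)*(p:ℚ)^2/(k:ℚ)^4)
        = 1/(k:ℚ)^2 + (7/6)*(p:ℚ)*(1/(k:ℚ)^3) + (5/8)*(p:ℚ)^2*(1/(k:ℚ)^4) := by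
      intro k hk
      simp only [Finset.mem_Icc] at hk
      have hk1 : (1:ℚ) ≤ (k:ℚ) := by exact_mod_cast hk.1
      have hK : (k:ℚ) ≠ 0 := by linarith
      unfold fff
      push_cast
      field_simp
      ring
    have hmaster : Hs n 2 + (7/6) * (p:ℚ) * Hs n 3 + (5/8) * (p:ℚ)^2 * Hs n 4
        = (p:ℚ)^4 * ∑ k ∈ Icc 1 n, (-((nkk p k : ℚ)/(dkk p k : ℚ))) := by
      rw [Finset.mul_sum, Finset.sum_congr rfl e1, Finset.sum_add_distrib,
        Finset.sum_neg_distrib, sum_comb (fff p) n, ← Finset.sum_neg_distrib,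
        ← Finset.sum_add_distrib, Finset.sum_congr rfl e2]
      unfold Hs
      rw [Finset.mul_sum, Finset.mul_sum, ← Finset.sum_add_distrib, ← Finset.sum_add_distrib]
    rcases eq_or_ne (Hs n 2 + (7/6) * (p:ℚ) * Hs n 3 + (5/8) * (p:ℚ)^2 * Hs n 4) 0 with hX | hX
    · left; exact hX
    · right
      rw [sub_zero, hmaster]
      have hSne : (∑ k ∈ Icc 1 n, (-((nkk p k : ℚ)/(dkk p k : ℚ)))) ≠ 0 := by
        intro h
        rw [hmaster, h, mul_zero] at hX
        exact hX rfl
      have hterm : ∀ k ∈ Icc 1 n, (-((nkk p k : ℚ)/(dkk p k : ℚ))) = 0 ∨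
          0 ≤ padicValRat p (-((nkk p k : ℚ)/(dkk p k : ℚ))) := by
        intro k hk
        simp only [Finset.mem_Icc] at hk
        by_cases hnk : nkk p k = 0
        · left; rw [hnk]; simp
        · right
          have hdkpos : 0 < dkk p k := by
            unfold dkk
            have h1 : 0 < p - k := by omega
            have h2 : 0 < p - 2*k := by omega
            exact Nat.mul_pos (Nat.mul_pos (Nat.mul_pos (by norm_num)
              (Nat.pow_pos (by omega))) (Nat.pow_pos h1)) (Nat.pow_pos h2)
          have hnd : ¬ p ∣ dkk p k := by
            intro hd
            unfold dkk at hd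
            have h288 : ¬ p ∣ 288 := by
              intro h
              have h' : p ∣ 2^5 * 3^2 := by
                have e : (2^5 * 3^2 : ℕ) = 288 := by norm_num
                rw [e]; exact h
              rcases (Nat.Prime.dvd_mul hp).mp h' with h'' | h''
              · have := Nat.le_of_dvd (by norm_num) (Nat.Prime.dvd_of_dvd_pow hp h''); omega
              · have := Nat.le_of_dvd (by norm_num) (Nat.Prime.dvd_of_dvd_pow hp h''); omega
            rcases (Nat.Prime.dvd_mul hp).mp hd with h | h
            · rcases (Nat.Prime.dvd_mul hp).mp h with h | h
              · rcases (Nat.Prime.dvd_mul hp).mp h with h | h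
                · exact h288 h
                · have := Nat.le_of_dvd (by omega) (Nat.Prime.dvd_of_dvd_pow hp h); omega
              · have := Nat.le_of_dvd (by omega) (Nat.Prime.dvd_of_dvd_pow hp h); omega
            · have := Nat.le_of_dvd (by omega) (Nat.Prime.dvd_of_dvd_pow hp h); omega
          rw [padicValRat.neg,
            padicValRat.div (by exact_mod_cast hnk)
              (by exact_mod_cast (Nat.cast_ne_zero (R := ℚ)).mpr hdkpos.ne'),
            padicValRat.of_int, padicValRat.of_nat, padicValNat.eq_zero_of_not_dvd hnd]
          simp
      rcases val_sum_nonneg p (Icc 1 n) _ hterm with h0 | hval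
      · exact absurd h0 hSne
      · rw [padicValRat.mul (by positivity) hSne]
        have hp4 : padicValRat p ((p:ℚ)^4) = 4 := by
          rw [show ((p:ℚ)^4) = ((p^4 : ℕ) : ℚ) by push_cast; ring,
            padicValRat.of_nat, padicValNat.prime_pow]
          norm_num
        rw [hp4]
        push_cast
        linarith
end

section
/- Let p > 5 be a prime. Then H_{(p-1)/2}(3) ≡ 6·H_{p-1}(1)/p² − (81/10)·p²·B_{p-5} (mod p³). -/
open Finset

/-- p-integral rational numbers -/
def PI (p : ℕ) (r : ℚ) : Prop := ∃ a b : ℤ, ¬ (p:ℤ) ∣ b ∧ r * b = a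

namespace PI

variable {p : ℕ}

theorem intCast (hp : p.Prime) (a : ℤ) : PI p (a : ℚ) :=
  ⟨a, 1, by simpa using (Nat.prime_iff_prime_int.1 hp).not_dvd_one, by simp⟩

theorem add (hp : p.Prime) {x y : ℚ} (hx : PI p x) (hy : PI p y) : PI p (x + y) := by
  obtain ⟨a₁, b₁, h₁, e₁⟩ := hx
  obtain ⟨a₂, b₂, h₂, e₂⟩ := hy
  refine ⟨a₁ * b₂ + a₂ * b₁, b₁ * b₂, ?_, ?_⟩
  · intro h
    rcases (Nat.prime_iff_prime_int.1 hp).dvd_mul.1 h with h | h <;> tauto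
  · push_cast
    push_cast at e₁ e₂
    linear_combination b₂ * e₁ + b₁ * e₂

theorem mul (hp : p.Prime) {x y : ℚ} (hx : PI p x) (hy : PI p y) : PI p (x * y) := by
  obtain ⟨a₁, b₁, h₁, e₁⟩ := hx
  obtain ⟨a₂, b₂, h₂, e₂⟩ := hy
  refine ⟨a₁ * a₂, b₁ * b₂, ?_, ?_⟩
  · intro h
    rcases (Nat.prime_iff_prime_int.1 hp).dvd_mul.1 h with h | h <;> tauto
  · push_cast
    push_cast at e₁ e₂
    linear_combination (x * b₁) * e₂ + a₂ * e₁

theorem div (hp : p.Prime) (a : ℤ) {b : ℤ} (hb : ¬ (p:ℤ) ∣ b) : PI p ((a : ℚ) / b) := by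
  have hbz : b ≠ 0 := fun h => hb (by simp [h])
  have hb0 : (b : ℚ) ≠ 0 := by exact_mod_cast hbz
  exact ⟨a, b, hb, by field_simp⟩

theorem sum (hp : p.Prime) {α : Type*} (s : Finset α) (f : α → ℚ)
    (h : ∀ i ∈ s, PI p (f i)) : PI p (∑ i ∈ s, f i) :=
  Finset.sum_induction f (PI p) (fun _ _ => add hp) (by simpa using intCast hp 0) h

theorem neg (hp : p.Prime) {x : ℚ} (hx : PI p x) : PI p (-x) := by
  have := mul hp (intCast hp (-1)) hx; simpa using this

theorem sub (hp : p.Prime) {x y : ℚ} (hx : PI p x) (hy : PI p y) : PI p (x - y) := by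
  have := add hp hx (neg hp hy); simpa [sub_eq_add_neg] using this

theorem valuation_nonneg (hp : p.Prime) {r : ℚ} (hr : PI p r) (h0 : r ≠ 0) :
    0 ≤ padicValRat p r := by
  haveI : Fact p.Prime := ⟨hp⟩
  obtain ⟨a, b, hb, e⟩ := hr
  have hbz : b ≠ 0 := fun h => hb (by simp [h])
  have hb0 : (b : ℚ) ≠ 0 := by exact_mod_cast hbz
  have ha0 : (a : ℚ) ≠ 0 := by
    rw [← e]; exact mul_ne_zero h0 hb0
  have hr' : r = (a : ℚ) / b := by field_simp [← e]; exact e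
  rw [hr', padicValRat.div (by exact_mod_cast ha0) (by exact_mod_cast hb0)]
  rw [padicValRat.of_int, padicValRat.of_int, padicValInt.eq_zero_of_not_dvd hb]
  simp [padicValInt]

end PI

/-- key conversion to the final goal -/
theorem pcong_of_PI {p : ℕ} (hp : p.Prime) (m : ℕ) (x y r : ℚ) (hr : PI p r)
    (he : x - y = (p:ℚ)^m * r) : pcong p m x y := by
  haveI : Fact p.Prime := ⟨hp⟩
  by_cases h0 : x = y
  · exact Or.inl h0
  · right
    have hd : x - y ≠ 0 := sub_ne_zero.2 h0
    have hr0 : r ≠ 0 := by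
      rintro rfl; simp at he; exact hd he
    have hpQ : (p:ℚ) ≠ 0 := by exact_mod_cast hp.ne_zero
    rw [he, padicValRat.mul (pow_ne_zero _ hpQ) hr0, padicValRat.pow (p:ℚ),
      padicValRat.self hp.one_lt]
    have := hr.valuation_nonneg hp hr0
    omega


/-- split `[1,p-1]` into lower half and reflected lower half -/
theorem reindex1 {M : Type*} [AddCommMonoid M] {p n : ℕ} (hpn : p = 2*n+1) (f : ℕ → M) :
    ∑ j ∈ Icc 1 (p-1), f j = ∑ k ∈ Icc 1 n, f k + ∑ k ∈ Icc 1 n, f (p - k) := by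
  have hsplit : Icc 1 (p-1) = Icc 1 n ∪ Icc (n+1) (p-1) := by
    ext x; simp only [mem_Icc, mem_union]; omega
  rw [hsplit, sum_union (by simp only [disjoint_left, mem_Icc]; omega)]
  congr 1
  refine sum_nbij' (fun j => p - j) (fun k => p - k) ?_ ?_ ?_ ?_ ?_ <;>
    simp only [mem_Icc] <;> intros <;> first | omega | (congr 1; omega)

/-- split `[1,p-1]` into evens `2i` and odds `p-2i`, `i ∈ [1,n]` -/
theorem reindex2 {M : Type*} [AddCommMonoid M] {p n : ℕ} (hpn : p = 2*n+1) (f : ℕ → M) :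
    ∑ j ∈ Icc 1 (p-1), f j = ∑ i ∈ Icc 1 n, f (2*i) + ∑ i ∈ Icc 1 n, f (p - 2*i) := by
  have hsplit : Icc 1 (p-1) =
      ((Icc 1 n).image (fun i => 2*i)) ∪ ((Icc 1 n).image (fun i => p - 2*i)) := by
    ext x
    simp only [mem_Icc, mem_union, mem_image]
    constructor
    · intro hx
      rcases Nat.even_or_odd x with ⟨c, hc⟩ | ⟨c, hc⟩
      · exact Or.inl ⟨c, by omega, by omega⟩
      · exact Or.inr ⟨n - c, by omega, by omega⟩
    · rintro (⟨i, hi, rfl⟩ | ⟨i, hi, rfl⟩) <;> omega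
  rw [hsplit, sum_union, sum_image (by intro a _ b _ h; simp only at h; omega),
    sum_image (by intro a ha b hb h; simp only [coe_Icc, Set.mem_Icc, mem_coe, mem_Icc] at ha hb h; omega)]
  · simp only [disjoint_left, mem_image, mem_Icc]
    rintro x ⟨i, hi, rfl⟩ ⟨j, hj, hij⟩
    omega

/-- binomial expansion mod b² -/
theorem bsq (t : ℕ) (a b : ℤ) : b^2 ∣ (a+b)^(t+1) - a^(t+1) - (t+1)*a^t*b := by
  induction t with
  | zero => simp
  | succ t ih =>
    obtain ⟨c, hc⟩ := ih
    refine ⟨c * (a+b) + (t+1) * a^t, ?_⟩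
    have h1 : (a+b)^(t+1) = a^(t+1) + (t+1)*a^t*b + b^2*c := by linear_combination hc
    have h2 : (a+b)^(t+1+1) = (a+b)^(t+1) * (a+b) := by ring
    rw [h2, h1]
    push_cast
    ring

theorem PI.natCast {p : ℕ} (hp : p.Prime) (a : ℕ) : PI p (a:ℚ) := by
  have := PI.intCast hp (a:ℤ); push_cast at this; exact this

theorem not_dvd_int {p : ℕ} (hp : p.Prime) {m : ℕ} (hm1 : 0 < m) (hm2 : m < p) :
    ¬ (p:ℤ) ∣ (m:ℤ) := by
  rw [Int.natCast_dvd_natCast]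
  intro h
  have := Nat.le_of_dvd hm1 h
  omega

theorem PI.inv_nat {p : ℕ} (hp : p.Prime) {m : ℕ} (hm1 : 0 < m) (hm2 : m < p) :
    PI p (1/(m:ℚ)) := by
  have := PI.div hp 1 (not_dvd_int hp hm1 hm2)
  push_cast at this
  exact this

theorem PI_p_mul_bernoulli {p : ℕ} (hp : p.Prime) :
    ∀ i, i ≤ p - 2 → PI p ((p:ℚ) * bernoulli i) := by
  intro i
  induction i using Nat.strong_induction_on with
  | _ i ih =>
    intro hi
    have hp2 : 2 ≤ p := hp.two_le
    have hne : ((i:ℚ) + 1) ≠ 0 := by positivity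
    have hfa := sum_range_pow p i
    rw [sum_range_succ] at hfa
    have htop : bernoulli i * (((i+1).choose i : ℕ) : ℚ) * (p:ℚ)^(i+1-i) / ((i:ℚ)+1)
        = (p:ℚ) * bernoulli i := by
      rw [Nat.choose_succ_self_right, Nat.add_sub_cancel_left]
      push_cast
      field_simp
    have key : (p:ℚ) * bernoulli i =
        (∑ k ∈ range p, (k:ℚ)^i) -
          ∑ j ∈ range i, bernoulli j * (((i+1).choose j : ℕ) : ℚ) * (p:ℚ)^(i+1-j) / ((i:ℚ)+1) := by
      rw [← htop]
      push_cast at hfa ⊢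
      linear_combination -hfa
    rw [key]
    refine PI.sub hp ?_ (PI.sum hp _ _ ?_)
    · have : (∑ k ∈ range p, (k:ℚ)^i) = ((∑ k ∈ range p, k^i : ℕ) : ℚ) := by push_cast; ring
      rw [this]; exact PI.natCast hp _
    · intro j hj
      simp only [mem_range] at hj
      have hij : i + 1 - j = (i - j) + 1 := by omega
      have hterm : bernoulli j * (((i+1).choose j : ℕ) : ℚ) * (p:ℚ)^(i+1-j) / ((i:ℚ)+1)
          = ((p:ℚ) * bernoulli j) * (((i+1).choose j : ℕ) : ℚ) * ((p^(i-j) : ℕ) : ℚ)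
            * (1/(((i+1 : ℕ)):ℚ)) := by
        rw [hij, pow_succ]
        push_cast
        ring
      rw [hterm]
      exact PI.mul hp (PI.mul hp (PI.mul hp (ih j hj (by omega)) (PI.natCast hp _))
        (PI.natCast hp _)) (PI.inv_nat hp (by omega) (by omega))

section
variable {p n : ℕ}

/-- key per-term divisibility -/
theorem hkey (hp5 : 5 < p) (k : ℤ) (hpar : Even (p-5)) :
    (p:ℤ)^2 ∣ ((p:ℤ) - k)^(p-5) - k^(p-5) - 5*(p:ℤ)*k^(p-6) := by
  have h65 : p - 5 = (p-6) + 1 := by omega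
  have hb := bsq (p-6) (-k) (p:ℤ)
  have hodd : Odd (p-6) := by
    rcases hpar with ⟨m, hm⟩
    exact ⟨m-1, by omega⟩
  have h1 : (-k + (p:ℤ)) = (p:ℤ) - k := by ring
  have h2 : (-k)^(p-6+1) = k^(p-6+1) := by
    rw [← h65]; exact hpar.neg_pow k
  have h3 : (-k)^(p-6) = -k^(p-6) := hodd.neg_pow k
  rw [h1, h2, h3] at hb
  obtain ⟨c, hcc⟩ := hb
  refine ⟨c - k^(p-6), ?_⟩
  have hc : ((p - 6 : ℕ) : ℤ) = (p:ℤ) - 6 := by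
    have h6 : 6 ≤ p := by omega
    push_cast [h6]; ring
  rw [hc] at hcc
  rw [h65]
  linear_combination hcc

theorem SZ_split1 (hpn : p = 2*n+1) (hp5 : 5 < p) :
    ∑ j ∈ Icc 1 (p-1), (j:ℤ)^(p-5)
      = ∑ k ∈ Icc 1 n, (k:ℤ)^(p-5) + ∑ k ∈ Icc 1 n, ((p:ℤ) - (k:ℤ))^(p-5) := by
  rw [reindex1 hpn (fun j => (j:ℤ)^(p-5))]
  congr 1
  refine sum_congr rfl fun k hk => ?_
  simp only [mem_Icc] at hk
  rw [Nat.cast_sub (by omega)]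

theorem SZ_split2 (hpn : p = 2*n+1) (hp5 : 5 < p) :
    ∑ j ∈ Icc 1 (p-1), (j:ℤ)^(p-5)
      = ∑ i ∈ Icc 1 n, (2*(i:ℤ))^(p-5) + ∑ i ∈ Icc 1 n, ((p:ℤ) - 2*(i:ℤ))^(p-5) := by
  have hA : ∑ i ∈ Icc 1 n, ((2*i : ℕ):ℤ)^(p-5) = ∑ i ∈ Icc 1 n, (2*(i:ℤ))^(p-5) :=
    sum_congr rfl fun i _ => by push_cast; ring
  have hB : ∑ i ∈ Icc 1 n, ((p - 2*i : ℕ):ℤ)^(p-5) = ∑ i ∈ Icc 1 n, ((p:ℤ) - 2*(i:ℤ))^(p-5) := by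
    refine sum_congr rfl fun i hi => ?_
    simp only [mem_Icc] at hi
    rw [Nat.cast_sub (by omega : 2*i ≤ p)]
    push_cast; ring
  rw [reindex2 hpn (fun j => (j:ℤ)^(p-5)), hA, hB]

theorem F1 (hpn : p = 2*n+1) (hp5 : 5 < p) : ∃ c : ℤ, ∑ j ∈ Icc 1 (p-1), (j:ℤ)^(p-5)
    = 2 * ∑ k ∈ Icc 1 n, (k:ℤ)^(p-5) + 5*(p:ℤ) * ∑ k ∈ Icc 1 n, (k:ℤ)^(p-6)
      + (p:ℤ)^2 * c := by
  have hpar : Even (p-5) := ⟨n-2, by omega⟩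
  have hdvd : (p:ℤ)^2 ∣ ∑ j ∈ Icc 1 (p-1), (j:ℤ)^(p-5)
      - (2 * ∑ k ∈ Icc 1 n, (k:ℤ)^(p-5) + 5*(p:ℤ) * ∑ k ∈ Icc 1 n, (k:ℤ)^(p-6)) := by
    rw [SZ_split1 hpn hp5]
    have heq : ∑ k ∈ Icc 1 n, (k:ℤ)^(p-5) + ∑ k ∈ Icc 1 n, ((p:ℤ) - (k:ℤ))^(p-5)
        - (2 * ∑ k ∈ Icc 1 n, (k:ℤ)^(p-5) + 5*(p:ℤ) * ∑ k ∈ Icc 1 n, (k:ℤ)^(p-6))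
        = ∑ k ∈ Icc 1 n, (((p:ℤ) - (k:ℤ))^(p-5) - (k:ℤ)^(p-5) - 5*(p:ℤ)*(k:ℤ)^(p-6)) := by
      rw [sum_sub_distrib, sum_sub_distrib, ← mul_sum]
      ring
    rw [heq]
    exact dvd_sum fun k _ => hkey hp5 _ hpar
  obtain ⟨c, hc⟩ := hdvd
  exact ⟨c, by linarith⟩

theorem F2 (hpn : p = 2*n+1) (hp5 : 5 < p) : ∃ c : ℤ, ∑ j ∈ Icc 1 (p-1), (j:ℤ)^(p-5)
    = 4 * 2^(p-6) * ∑ k ∈ Icc 1 n, (k:ℤ)^(p-5)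
      + 5*(p:ℤ) * 2^(p-6) * ∑ k ∈ Icc 1 n, (k:ℤ)^(p-6) + (p:ℤ)^2 * c := by
  have hpar : Even (p-5) := ⟨n-2, by omega⟩
  have e5 : ∀ i : ℤ, (2*i)^(p-5) = 2 * 2^(p-6) * i^(p-5) := by
    intro i
    have h : p - 5 = (p-6) + 1 := by omega
    rw [h, mul_pow, pow_succ]
    ring
  have e6 : ∀ i : ℤ, (2*i)^(p-6) = 2^(p-6) * i^(p-6) := fun i => mul_pow 2 i (p-6)
  have hdvd : (p:ℤ)^2 ∣ ∑ j ∈ Icc 1 (p-1), (j:ℤ)^(p-5)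
      - (4 * 2^(p-6) * ∑ k ∈ Icc 1 n, (k:ℤ)^(p-5)
        + 5*(p:ℤ) * 2^(p-6) * ∑ k ∈ Icc 1 n, (k:ℤ)^(p-6)) := by
    rw [SZ_split2 hpn hp5]
    have heq : ∑ i ∈ Icc 1 n, (2*(i:ℤ))^(p-5) + ∑ i ∈ Icc 1 n, ((p:ℤ) - 2*(i:ℤ))^(p-5)
        - (4 * 2^(p-6) * ∑ k ∈ Icc 1 n, (k:ℤ)^(p-5)
          + 5*(p:ℤ) * 2^(p-6) * ∑ k ∈ Icc 1 n, (k:ℤ)^(p-6))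
        = ∑ i ∈ Icc 1 n, (((p:ℤ) - 2*(i:ℤ))^(p-5) - (2*(i:ℤ))^(p-5) - 5*(p:ℤ)*(2*(i:ℤ))^(p-6)) := by
      simp only [sum_sub_distrib, e5, e6]
      simp only [← mul_sum]
      ring
    rw [heq]
    exact dvd_sum fun i _ => hkey hp5 _ hpar
  obtain ⟨c, hc⟩ := hdvd
  exact ⟨c, by linarith⟩

theorem F3 (hp : p.Prime) (hp5 : 5 < p) : ∃ s : ℤ, ∑ j ∈ Icc 1 (p-1), (j:ℤ)^(p-5) = (p:ℤ) * s := by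
  haveI : Fact p.Prime := ⟨hp⟩
  haveI : NeZero p := ⟨hp.ne_zero⟩
  suffices h : ((∑ j ∈ Icc 1 (p-1), (j:ℤ)^(p-5) : ℤ) : ZMod p) = 0 by
    obtain ⟨s, hs⟩ := (ZMod.intCast_zmod_eq_zero_iff_dvd _ p).1 h
    exact ⟨s, hs⟩
  push_cast
  have h1 : ∑ j ∈ Icc 1 (p-1), ((j:ℕ) : ZMod p)^(p-5) = ∑ j ∈ range p, ((j:ℕ) : ZMod p)^(p-5) := by
    have : range p = insert 0 (Icc 1 (p-1)) := by
      ext x; simp only [mem_range, mem_insert, mem_Icc]; omega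
    rw [this, sum_insert (by simp)]
    simp only [Nat.cast_zero]
    rw [zero_pow (by omega)]
    ring
  rw [h1]
  have h2 : ∑ j ∈ range p, ((j:ℕ) : ZMod p)^(p-5) = ∑ x : ZMod p, x^(p-5) := by
    refine sum_nbij' (fun k => ((k:ℕ) : ZMod p)) (fun x => x.val) (fun a _ => mem_univ _)
      (fun x _ => mem_range.2 (ZMod.val_lt x)) ?_ ?_ ?_
    · intro a ha; exact ZMod.val_natCast_of_lt (mem_range.1 ha)
    · intro x _; exact ZMod.natCast_zmod_val x
    · intro a _; rfl
  rw [h2]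
  exact FiniteField.sum_pow_lt_card_sub_one (ZMod p) (p-5) (by rw [ZMod.card]; omega)

theorem F4 (hp : p.Prime) (hp5 : 5 < p) : ∃ q : ℤ, (2:ℤ)^(p-1) = 1 + (p:ℤ) * q := by
  haveI : Fact p.Prime := ⟨hp⟩
  have h2 : ((2:ℕ) : ZMod p) ≠ 0 := by
    rw [Ne, ZMod.natCast_eq_zero_iff]
    intro h
    have := Nat.le_of_dvd (by norm_num) h
    omega
  have hF : ((2:ℕ) : ZMod p)^(p-1) = 1 := ZMod.pow_card_sub_one_eq_one h2
  have h0 : (((2:ℤ)^(p-1) - 1 : ℤ) : ZMod p) = 0 := by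
    push_cast at hF ⊢
    rw [hF]; ring
  obtain ⟨q, hq⟩ := (ZMod.intCast_zmod_eq_zero_iff_dvd _ p).1 h0
  exact ⟨q, by linarith⟩

theorem F5 (hp : p.Prime) (hpn : p = 2*n+1) (hp5 : 5 < p) : ∃ c : ℤ, 60 * ∑ j ∈ Icc 1 (p-1), (j:ℤ)^(p-5)
    + 10*(p:ℤ) * ∑ k ∈ Icc 1 n, (k:ℤ)^(p-6) = (p:ℤ)^2 * c := by
  obtain ⟨c₁, h1⟩ := F1 hpn hp5
  obtain ⟨c₂, h2⟩ := F2 hpn hp5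
  obtain ⟨s₁, h3⟩ := F3 hp hp5
  obtain ⟨q, h4⟩ := F4 hp hp5
  set S := ∑ j ∈ Icc 1 (p-1), (j:ℤ)^(p-5) with hS
  set T := ∑ k ∈ Icc 1 n, (k:ℤ)^(p-6) with hT
  set T4 := ∑ k ∈ Icc 1 n, (k:ℤ)^(p-5) with hT4
  set x := (2:ℤ)^(p-6) with hx
  have h4' : 32 * x = 1 + (p:ℤ) * q := by
    rw [hx, ← h4]
    have : p - 1 = (p-6) + 5 := by omega
    rw [this, pow_add]
    ring
  refine ⟨-2*(5*q*T + 32*(2*x*c₁ - c₂) - 2*q*s₁), ?_⟩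
  linear_combination (-128*x)*h1 + 64*h2 + 4*(p:ℤ)*q*h3 + (4*S - 10*(p:ℤ)*T)*h4'
end

theorem PI_bern_p6 {p n : ℕ} (hp : p.Prime) (hpn : p = 2*n+1) (hp5 : 5 < p) :
    PI p (bernoulli (p-6)) := by
  by_cases h7 : p = 7
  · subst h7
    rw [show (7-6 : ℕ) = 1 from rfl, bernoulli_one]
    have h2 := PI.div hp (-1) (b := 2) (by decide)
    have he : ((-1 : ℤ) : ℚ) / ((2:ℤ) : ℚ) = -1/2 := by norm_num
    rwa [he] at h2
  · have h9 : 9 ≤ p := by omega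
    have hne : p - 6 ≠ 1 := by omega
    rw [bernoulli_eq_bernoulli'_of_ne_one hne,
      bernoulli'_eq_zero_of_odd ⟨n - 3, by omega⟩ (by omega)]
    have := PI.intCast hp 0
    push_cast at this
    exact this

theorem Fb {p n : ℕ} (hp : p.Prime) (hpn : p = 2*n+1) (hp5 : 5 < p) :
    ∃ σ : ℚ, PI p σ ∧ ((∑ j ∈ Icc 1 (p-1), (j:ℤ)^(p-5) : ℤ) : ℚ)
      = (p:ℚ) * bernoulli (p-5) + (p:ℚ)^2 * σ := by
  have h5 : 5 ≤ p := by omega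
  have hcast : ((∑ j ∈ Icc 1 (p-1), (j:ℤ)^(p-5) : ℤ) : ℚ) = ∑ k ∈ range p, (k:ℚ)^(p-5) := by
    push_cast
    have hins : range p = insert 0 (Icc 1 (p-1)) := by
      ext x; simp only [mem_range, mem_insert, mem_Icc]; omega
    rw [hins, sum_insert (by simp)]
    rw [Nat.cast_zero, zero_pow (by omega : p-5 ≠ 0)]
    ring
  have hden : ((p-5:ℕ):ℚ) + 1 ≠ 0 := by positivity
  have hfa := sum_range_pow p (p-5)
  rw [sum_range_succ] at hfa
  have htop : bernoulli (p-5) * (((p-5+1).choose (p-5) : ℕ) : ℚ) * (p:ℚ)^(p-5+1-(p-5))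
      / (((p-5:ℕ):ℚ)+1) = (p:ℚ) * bernoulli (p-5) := by
    rw [Nat.choose_succ_self_right, show p-5+1-(p-5) = 1 from by omega]
    have h6 : (6:ℚ) ≤ (p:ℚ) := by exact_mod_cast (by omega : 6 ≤ p)
    have h4 : (p:ℚ) - 5 + 1 ≠ 0 := by intro h; linarith
    push_cast
    field_simp
  rw [htop] at hfa
  refine ⟨∑ i ∈ range (p-5),
    bernoulli i * (((p-5+1).choose i : ℕ) : ℚ) * (p:ℚ)^(p-6-i) / (((p-5:ℕ):ℚ)+1), ?_, ?_⟩
  · refine PI.sum hp _ _ fun i hi => ?_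
    simp only [mem_range] at hi
    have hdenPI : PI p (1 / (((p-4:ℕ)):ℚ)) := PI.inv_nat hp (by omega) (by omega)
    have hdeneq : (((p-5:ℕ)):ℚ) + 1 = ((p-4:ℕ):ℚ) := by
      have h4 : 4 ≤ p := by omega
      push_cast [Nat.cast_sub h5, Nat.cast_sub h4]
      ring
    by_cases hip : i = p-6
    · subst hip
      have : bernoulli (p-6) * (((p-5+1).choose (p-6) : ℕ) : ℚ) * (p:ℚ)^(p-6-(p-6))
          / (((p-5:ℕ):ℚ)+1)
          = bernoulli (p-6) * (((p-5+1).choose (p-6) : ℕ) : ℚ) * (1 / (((p-4:ℕ)):ℚ)) := by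
        rw [hdeneq, show p-6-(p-6) = 0 from by omega]
        ring
      rw [this]
      exact PI.mul hp (PI.mul hp (PI_bern_p6 hp hpn hp5) (PI.natCast hp _)) hdenPI
    · have hi7 : i ≤ p - 7 := by omega
      have : bernoulli i * (((p-5+1).choose i : ℕ) : ℚ) * (p:ℚ)^(p-6-i) / (((p-5:ℕ):ℚ)+1)
          = ((p:ℚ) * bernoulli i) * (((p-5+1).choose i : ℕ) : ℚ) * (p:ℚ)^(p-7-i)
            * (1 / (((p-4:ℕ)):ℚ)) := by
        rw [hdeneq, show p-6-i = (p-7-i)+1 from by omega, pow_succ]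
        ring
      rw [this]
      have hpow : PI p ((p:ℚ)^(p-7-i)) := by
        have := PI.natCast hp (p^(p-7-i)); push_cast at this; exact this
      exact PI.mul hp (PI.mul hp (PI.mul hp (PI_p_mul_bernoulli hp i (by omega))
        (PI.natCast hp _)) hpow) hdenPI
  · have hsum : ∑ i ∈ range (p-5),
        bernoulli i * (((p-5+1).choose i : ℕ) : ℚ) * (p:ℚ)^(p-5+1-i) / (((p-5:ℕ):ℚ)+1)
        = ∑ i ∈ range (p-5), (p:ℚ)^2 *
          (bernoulli i * (((p-5+1).choose i : ℕ) : ℚ) * (p:ℚ)^(p-6-i) / (((p-5:ℕ):ℚ)+1)) := by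
      refine sum_congr rfl fun i hi => ?_
      simp only [mem_range] at hi
      rw [show p-5+1-i = (p-6-i)+2 from by omega, pow_add]
      ring
    rw [hcast, hfa, hsum, ← mul_sum]
    ring

theorem fermat_w {p k : ℕ} (hp : p.Prime) (hk1 : 0 < k) (hk2 : k < p) :
    ∃ w : ℤ, (k:ℤ)^(p-1) = 1 + (p:ℤ) * w := by
  haveI : Fact p.Prime := ⟨hp⟩
  have hk0 : ((k:ℕ) : ZMod p) ≠ 0 := by
    rw [Ne, ZMod.natCast_eq_zero_iff]
    intro h
    have := Nat.le_of_dvd hk1 h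
    omega
  have hF : ((k:ℕ) : ZMod p)^(p-1) = 1 := ZMod.pow_card_sub_one_eq_one hk0
  have h0 : (((k:ℤ)^(p-1) - 1 : ℤ) : ZMod p) = 0 := by
    push_cast at hF ⊢
    rw [hF]; ring
  obtain ⟨w, hw⟩ := (ZMod.intCast_zmod_eq_zero_iff_dvd _ p).1 h0
  exact ⟨w, by linarith⟩

theorem E4 {p n : ℕ} (hp : p.Prime) (hpn : p = 2*n+1) (hp5 : 5 < p) :
    ∃ r : ℚ, PI p r ∧
      (p:ℚ)^2 * Hs n 5 + 6*(p:ℚ)^2*(bernoulli (p-5)) = (p:ℚ)^3 * r := by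
  have hpQ : (p:ℚ) ≠ 0 := by exact_mod_cast hp.ne_zero
  -- step a : Hs n 5 = Tcast + p * ρ
  set ρ : ℚ := ∑ k ∈ Icc 1 n, (1/(k:ℚ)^5 - (k:ℚ)^(p-6))/p with hρdef
  have hρPI : PI p ρ := by
    refine PI.sum hp _ _ fun k hk => ?_
    simp only [mem_Icc] at hk
    obtain ⟨w, hw⟩ := fermat_w hp (by omega) (by omega : k < p)
    have hkQ : (k:ℚ) ≠ 0 := by
      exact_mod_cast (by omega : k ≠ 0)
    have hwQ : (k:ℚ)^(p-1) = 1 + (p:ℚ) * (w:ℚ) := by exact_mod_cast hw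
    have hid : (1/(k:ℚ)^5 - (k:ℚ)^(p-6))/p = ((-w : ℤ):ℚ)/((k^5 : ℤ):ℚ) := by
      have hsplit : (k:ℚ)^(p-6) * (k:ℚ)^5 = (k:ℚ)^(p-1) := by
        rw [← pow_add]
        congr 1
        omega
      push_cast
      field_simp
      linear_combination (-1) * hsplit + (-1) * hwQ
    rw [hid]
    refine PI.div hp _ ?_
    intro hdvd
    have hpk : (p:ℤ) ∣ (k:ℤ) := (Nat.prime_iff_prime_int.1 hp).dvd_of_dvd_pow hdvd
    have := Nat.le_of_dvd (by omega) (Int.natCast_dvd_natCast.1 hpk)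
    omega
  have hstepa : Hs n 5 = ((∑ k ∈ Icc 1 n, (k:ℤ)^(p-6) : ℤ):ℚ) + (p:ℚ) * ρ := by
    have hTcast : ((∑ k ∈ Icc 1 n, (k:ℤ)^(p-6) : ℤ):ℚ) = ∑ k ∈ Icc 1 n, (k:ℚ)^(p-6) := by
      push_cast; ring
    rw [hTcast, hρdef, mul_sum]
    unfold Hs
    rw [← sum_add_distrib]
    refine sum_congr rfl fun k hk => ?_
    rw [mul_div_cancel₀ _ hpQ]
    ring
  obtain ⟨c₅, hF5⟩ := F5 hp hpn hp5
  have hF5Q : 60 * ((∑ j ∈ Icc 1 (p-1), (j:ℤ)^(p-5) : ℤ):ℚ)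
      + 10*(p:ℚ)*((∑ k ∈ Icc 1 n, (k:ℤ)^(p-6) : ℤ):ℚ) = (p:ℚ)^2 * (c₅:ℚ) := by
    exact_mod_cast congrArg (fun z : ℤ => (z : ℚ)) hF5
  obtain ⟨σ, hσPI, hFb⟩ := Fb hp hpn hp5
  refine ⟨ρ + (c₅:ℚ)/10 - 6*σ, ?_, ?_⟩
  · have h10 : ¬ (p:ℤ) ∣ (10:ℤ) := by
      intro h
      have h' : p ∣ 10 := by exact_mod_cast h
      have := Nat.le_of_dvd (by norm_num) h'
      interval_cases p <;> revert hp h' <;> decide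
    have hc5 : PI p ((c₅:ℚ)/10) := by
      have := PI.div hp c₅ (b := 10) h10
      push_cast at this
      exact this
    exact PI.sub hp (PI.add hp hρPI hc5) (PI.mul hp (PI.natCast hp 6) hσPI)
  · linear_combination (p:ℚ)^2*hstepa + ((p:ℚ)/10)*hF5Q + (-6*(p:ℚ))*hFb

theorem not_dvd_nat_prime {p m : ℕ} (hp : p.Prime) (hm1 : 0 < m) (hm2 : m < p) :
    ¬ (p:ℤ) ∣ (m:ℤ) := by
  rw [Int.natCast_dvd_natCast]
  intro h
  have := Nat.le_of_dvd hm1 h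
  omega

/-- PI of fractions with denominator a product of powers of small numbers -/
theorem PI_frac {p : ℕ} (hp : p.Prime) (a : ℤ) {b c : ℕ} (hb1 : 0 < b) (hb2 : b < p)
    (hc1 : 0 < c) (hc2 : c < p) (e f : ℕ) :
    PI p ((a:ℚ) / ((b:ℚ)^e * (c:ℚ)^f)) := by
  have hdvd : ¬ (p:ℤ) ∣ ((b:ℤ)^e * (c:ℤ)^f) := by
    intro h
    have hP := Nat.prime_iff_prime_int.1 hp
    rcases hP.dvd_mul.1 h with h' | h'
    · exact not_dvd_nat_prime hp hb1 hb2 (hP.dvd_of_dvd_pow h')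
    · exact not_dvd_nat_prime hp hc1 hc2 (hP.dvd_of_dvd_pow h')
  have := PI.div hp a hdvd
  have hcast : (((b:ℤ)^e * (c:ℤ)^f : ℤ) : ℚ) = (b:ℚ)^e * (c:ℚ)^f := by push_cast; ring
  rwa [hcast] at this

section
variable {p n : ℕ}

theorem E1 (hp : p.Prime) (hpn : p = 2*n+1) (hp5 : 5 < p) :
    ∃ r : ℚ, PI p r ∧ Hs (p-1) 1 + (p:ℚ)*Hs n 2 + (p:ℚ)^2*Hs n 3 + (p:ℚ)^3*Hs n 4
      + (p:ℚ)^4*Hs n 5 = (p:ℚ)^5 * r := by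
  refine ⟨∑ k ∈ Icc 1 n, 1/((k:ℚ)^5 * ((p:ℚ)-(k:ℚ))), ?_, ?_⟩
  · refine PI.sum hp _ _ fun k hk => ?_
    simp only [mem_Icc] at hk
    have hpk : ((p-k:ℕ):ℚ) = (p:ℚ)-(k:ℚ) := by
      rw [Nat.cast_sub (by omega)]
    rw [← hpk]
    have := PI_frac hp 1 (b := k) (by omega) (by omega) (c := p-k) (by omega) (by omega) 5 1
    push_cast at this ⊢
    convert this using 2
    ring
  · unfold Hs
    rw [reindex1 hpn (fun j => 1/(j:ℚ)^1)]
    simp only [mul_sum]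
    simp only [← sum_add_distrib]
    refine sum_congr rfl fun k hk => ?_
    simp only [mem_Icc] at hk
    have hkQ : (k:ℚ) ≠ 0 := by exact_mod_cast (by omega : k ≠ 0)
    have hpk : ((p-k:ℕ):ℚ) = (p:ℚ)-(k:ℚ) := by rw [Nat.cast_sub (by omega)]
    have hpkne : (p:ℚ)-(k:ℚ) ≠ 0 := by
      have h0 : (0:ℚ) < ((p-k:ℕ):ℚ) := by exact_mod_cast (by omega : 0 < p-k)
      rw [hpk] at h0; linarith
    rw [hpk]
    field_simp
    ring

theorem E2 (hp : p.Prime) (hpn : p = 2*n+1) (hp5 : 5 < p) :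
    ∃ r : ℚ, PI p r ∧ (3/2)*Hs n 2 + (7/4)*(p:ℚ)*Hs n 3 + (45/16)*(p:ℚ)^2*Hs n 4
      + (31/8)*(p:ℚ)^3*Hs n 5 = (p:ℚ)^4 * r := by
  have hB : Hs (p-1) 2 = 2*Hs n 2 + 2*(p:ℚ)*Hs n 3 + 3*(p:ℚ)^2*Hs n 4 + 4*(p:ℚ)^3*Hs n 5
      + (p:ℚ)^4 * ∑ k ∈ Icc 1 n, (5*(k:ℚ)-4*(p:ℚ))/((k:ℚ)^5 * ((p:ℚ)-(k:ℚ))^2) := by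
    unfold Hs
    rw [reindex1 hpn (fun j => 1/(j:ℚ)^2)]
    simp only [mul_sum]
    simp only [← sum_add_distrib]
    refine sum_congr rfl fun k hk => ?_
    simp only [mem_Icc] at hk
    have hkQ : (k:ℚ) ≠ 0 := by exact_mod_cast (by omega : k ≠ 0)
    have hpk : ((p-k:ℕ):ℚ) = (p:ℚ)-(k:ℚ) := by rw [Nat.cast_sub (by omega)]
    have hpkne : (p:ℚ)-(k:ℚ) ≠ 0 := by
      have h0 : (0:ℚ) < ((p-k:ℕ):ℚ) := by exact_mod_cast (by omega : 0 < p-k)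
      rw [hpk] at h0; linarith
    rw [hpk]
    field_simp
    ring
  have hA : Hs (p-1) 2 = (1/2)*Hs n 2 + (1/4)*(p:ℚ)*Hs n 3 + (3/16)*(p:ℚ)^2*Hs n 4
      + (1/8)*(p:ℚ)^3*Hs n 5
      + (p:ℚ)^4 * ∑ k ∈ Icc 1 n, (10*(k:ℚ)-4*(p:ℚ))/(32*(k:ℚ)^5 * ((p:ℚ)-2*(k:ℚ))^2) := by
    unfold Hs
    rw [reindex2 hpn (fun j => 1/(j:ℚ)^2)]
    simp only [mul_sum]
    simp only [← sum_add_distrib]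
    refine sum_congr rfl fun k hk => ?_
    simp only [mem_Icc] at hk
    have hkQ : (k:ℚ) ≠ 0 := by exact_mod_cast (by omega : k ≠ 0)
    have h2k : ((2*k:ℕ):ℚ) = 2*(k:ℚ) := by push_cast; ring
    have hpk : ((p-2*k:ℕ):ℚ) = (p:ℚ)-2*(k:ℚ) := by
      rw [Nat.cast_sub (by omega)]; push_cast; ring
    have hpkne : (p:ℚ)-2*(k:ℚ) ≠ 0 := by
      have h0 : (0:ℚ) < ((p-2*k:ℕ):ℚ) := by exact_mod_cast (by omega : 0 < p-2*k)
      rw [hpk] at h0; linarith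
    rw [h2k, hpk]
    field_simp
    ring
  refine ⟨(∑ k ∈ Icc 1 n, (10*(k:ℚ)-4*(p:ℚ))/(32*(k:ℚ)^5 * ((p:ℚ)-2*(k:ℚ))^2))
    - (∑ k ∈ Icc 1 n, (5*(k:ℚ)-4*(p:ℚ))/((k:ℚ)^5 * ((p:ℚ)-(k:ℚ))^2)), ?_, ?_⟩
  · refine PI.sub hp (PI.sum hp _ _ fun k hk => ?_) (PI.sum hp _ _ fun k hk => ?_)
    · simp only [mem_Icc] at hk
      have hpk : ((p-2*k:ℕ):ℚ) = (p:ℚ)-2*(k:ℚ) := by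
        rw [Nat.cast_sub (by omega)]; push_cast; ring
      rw [← hpk]
      have := PI_frac hp (10*(k:ℤ)-4*(p:ℤ)) (b := 2*k) (by omega) (by omega)
        (c := p-2*k) (by omega) (by omega) 5 2
      push_cast at this ⊢
      convert this using 2
      ring
    · simp only [mem_Icc] at hk
      have hpk : ((p-k:ℕ):ℚ) = (p:ℚ)-(k:ℚ) := by rw [Nat.cast_sub (by omega)]
      rw [← hpk]
      have := PI_frac hp (5*(k:ℤ)-4*(p:ℤ)) (b := k) (by omega) (by omega)
        (c := p-k) (by omega) (by omega) 5 2
      push_cast at this ⊢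
      convert this using 2
  · linear_combination hA - hB

theorem E3 (hp : p.Prime) (hpn : p = 2*n+1) (hp5 : 5 < p) :
    ∃ r : ℚ, PI p r ∧ (15/8)*Hs n 4 + (31/8)*(p:ℚ)*Hs n 5 = (p:ℚ)^2 * r := by
  have hB : Hs (p-1) 4 = 2*Hs n 4 + 4*(p:ℚ)*Hs n 5
      + (p:ℚ)^2 * ∑ k ∈ Icc 1 n,
        (10*(k:ℚ)^3-20*(k:ℚ)^2*(p:ℚ)+15*(k:ℚ)*(p:ℚ)^2-4*(p:ℚ)^3)
          /((k:ℚ)^5 * ((p:ℚ)-(k:ℚ))^4) := by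
    unfold Hs
    rw [reindex1 hpn (fun j => 1/(j:ℚ)^4)]
    simp only [mul_sum]
    simp only [← sum_add_distrib]
    refine sum_congr rfl fun k hk => ?_
    simp only [mem_Icc] at hk
    have hkQ : (k:ℚ) ≠ 0 := by exact_mod_cast (by omega : k ≠ 0)
    have hpk : ((p-k:ℕ):ℚ) = (p:ℚ)-(k:ℚ) := by rw [Nat.cast_sub (by omega)]
    have hpkne : (p:ℚ)-(k:ℚ) ≠ 0 := by
      have h0 : (0:ℚ) < ((p-k:ℕ):ℚ) := by exact_mod_cast (by omega : 0 < p-k)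
      rw [hpk] at h0; linarith
    rw [hpk]
    field_simp
    ring
  have hA : Hs (p-1) 4 = (1/8)*Hs n 4 + (1/8)*(p:ℚ)*Hs n 5
      + (p:ℚ)^2 * ∑ k ∈ Icc 1 n,
        (80*(k:ℚ)^3-80*(k:ℚ)^2*(p:ℚ)+30*(k:ℚ)*(p:ℚ)^2-4*(p:ℚ)^3)
          /(32*(k:ℚ)^5 * ((p:ℚ)-2*(k:ℚ))^4) := by
    unfold Hs
    rw [reindex2 hpn (fun j => 1/(j:ℚ)^4)]
    simp only [mul_sum]
    simp only [← sum_add_distrib]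
    refine sum_congr rfl fun k hk => ?_
    simp only [mem_Icc] at hk
    have hkQ : (k:ℚ) ≠ 0 := by exact_mod_cast (by omega : k ≠ 0)
    have h2k : ((2*k:ℕ):ℚ) = 2*(k:ℚ) := by push_cast; ring
    have hpk : ((p-2*k:ℕ):ℚ) = (p:ℚ)-2*(k:ℚ) := by
      rw [Nat.cast_sub (by omega)]; push_cast; ring
    have hpkne : (p:ℚ)-2*(k:ℚ) ≠ 0 := by
      have h0 : (0:ℚ) < ((p-2*k:ℕ):ℚ) := by exact_mod_cast (by omega : 0 < p-2*k)
      rw [hpk] at h0; linarith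
    rw [h2k, hpk]
    field_simp
    ring
  refine ⟨(∑ k ∈ Icc 1 n,
      (80*(k:ℚ)^3-80*(k:ℚ)^2*(p:ℚ)+30*(k:ℚ)*(p:ℚ)^2-4*(p:ℚ)^3)
        /(32*(k:ℚ)^5 * ((p:ℚ)-2*(k:ℚ))^4))
    - (∑ k ∈ Icc 1 n,
      (10*(k:ℚ)^3-20*(k:ℚ)^2*(p:ℚ)+15*(k:ℚ)*(p:ℚ)^2-4*(p:ℚ)^3)
        /((k:ℚ)^5 * ((p:ℚ)-(k:ℚ))^4)), ?_, ?_⟩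
  · refine PI.sub hp (PI.sum hp _ _ fun k hk => ?_) (PI.sum hp _ _ fun k hk => ?_)
    · simp only [mem_Icc] at hk
      have hpk : ((p-2*k:ℕ):ℚ) = (p:ℚ)-2*(k:ℚ) := by
        rw [Nat.cast_sub (by omega)]; push_cast; ring
      rw [← hpk]
      have := PI_frac hp (80*(k:ℤ)^3-80*(k:ℤ)^2*(p:ℤ)+30*(k:ℤ)*(p:ℤ)^2-4*(p:ℤ)^3)
        (b := 2*k) (by omega) (by omega) (c := p-2*k) (by omega) (by omega) 5 4
      push_cast at this ⊢
      convert this using 2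
      ring
    · simp only [mem_Icc] at hk
      have hpk : ((p-k:ℕ):ℚ) = (p:ℚ)-(k:ℚ) := by rw [Nat.cast_sub (by omega)]
      rw [← hpk]
      have := PI_frac hp (10*(k:ℤ)^3-20*(k:ℤ)^2*(p:ℤ)+15*(k:ℤ)*(p:ℤ)^2-4*(p:ℤ)^3)
        (b := k) (by omega) (by omega) (c := p-k) (by omega) (by omega) 5 4
      push_cast at this ⊢
      convert this using 2
  · linear_combination hA - hB
end


theorem stmt3 (p : ℕ) (hp : p.Prime) (hp5 : 5 < p) :
    pcong p 3 (Hs ((p - 1) / 2) 3)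
      (6 * Hs (p - 1) 1 / p ^ 2 - (81 / 10) * p ^ 2 * bernoulli (p - 5)) := by
  obtain ⟨n, hpn⟩ : ∃ n, p = 2*n+1 := by
    rcases hp.eq_two_or_odd' with h | ⟨m, hm⟩
    · omega
    · exact ⟨m, hm⟩
  have hn : (p-1)/2 = n := by omega
  rw [hn]
  obtain ⟨r₁, h1PI, h1⟩ := E1 hp hpn hp5
  obtain ⟨r₂, h2PI, h2⟩ := E2 hp hpn hp5
  obtain ⟨r₃, h3PI, h3⟩ := E3 hp hpn hp5
  obtain ⟨r₄, h4PI, h4⟩ := E4 hp hpn hp5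
  have hpQ : (p:ℚ) ≠ 0 := by exact_mod_cast hp.ne_zero
  have h5d : ¬ (p:ℤ) ∣ (5:ℤ) := by
    intro h
    have h' : p ∣ 5 := by exact_mod_cast h
    have := Nat.le_of_dvd (by norm_num) h'
    omega
  have h20d : ¬ (p:ℤ) ∣ (20:ℤ) := by
    intro h
    have h' : p ∣ 20 := by exact_mod_cast h
    have := Nat.le_of_dvd (by norm_num) h'
    interval_cases p <;> revert hp h' <;> decide
  have hc14 : PI p ((14:ℚ)/5) := by
    have := PI.div hp 14 h5d; push_cast at this; exact this
  have hc27 : PI p ((27:ℚ)/20) := by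
    have := PI.div hp 27 h20d; push_cast at this; exact this
  have hr5PI : PI p (-6*r₁ + 4*r₂ - (14/5)*r₃ + (27/20)*r₄) := by
    refine PI.add hp (PI.sub hp (PI.add hp ?_ ?_) ?_) ?_
    · have := PI.mul hp (PI.intCast hp (-6)) h1PI; push_cast at this; exact this
    · have := PI.mul hp (PI.intCast hp 4) h2PI; push_cast at this; exact this
    · exact PI.mul hp hc14 h3PI
    · exact PI.mul hp hc27 h4PI
  apply pcong_of_PI hp 3 _ _ _ hr5PI
  have hdiv : (p:ℚ)^2 * (6 * Hs (p-1) 1 / (p:ℚ)^2) = 6 * Hs (p-1) 1 := by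
    field_simp
  have key : (p:ℚ)^2 * (Hs n 3 - (6 * Hs (p - 1) 1 / (p:ℚ) ^ 2
      - (81 / 10) * (p:ℚ) ^ 2 * bernoulli (p - 5)))
      = (p:ℚ)^2 * ((p:ℚ)^3 * (-6*r₁ + 4*r₂ - (14/5)*r₃ + (27/20)*r₄)) := by
    linear_combination (-1)*hdiv + (-6)*h1 + 4*(p:ℚ)*h2 + (-(14/5))*(p:ℚ)^3*h3
      + (27/20)*(p:ℚ)^2*h4
  exact mul_left_cancel₀ (pow_ne_zero 2 hpQ) key
end

section
/- Let r and a be positive integers and let p > r + 2 be a prime. Then H_{p-1}(r) ≡ H_{(p-1)/2}(r) + (−1)^r · Σ_{k=0}^{a} binom(r−1+k, k) · H_{(p-1)/2}(r+k) · p^k (mod p^{a+1}). -/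
open Polynomial in
lemma key_poly (r a : ℕ) (hr : 0 < r) :
    ∃ Q : Polynomial ℤ, (1 - Polynomial.X) ^ r *
      (∑ k ∈ Finset.range (a + 1), Polynomial.C (Nat.choose (r - 1 + k) k : ℤ) * Polynomial.X ^ k)
      = 1 - Polynomial.X ^ (a + 1) * Q := by
  set S : Polynomial ℤ := ∑ k ∈ Finset.range (a + 1),
      Polynomial.C (Nat.choose (r - 1 + k) k : ℤ) * Polynomial.X ^ k with hS
  have hdvd : (Polynomial.X : Polynomial ℤ) ^ (a + 1) ∣ (1 - (1 - Polynomial.X) ^ r * S) := by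
    rw [Polynomial.X_pow_dvd_iff]
    intro d hd
    have hco : ((1 - (1 - Polynomial.X) ^ r * S : Polynomial ℤ) : PowerSeries ℤ)
        = 1 - (1 - PowerSeries.X) ^ r * (S : PowerSeries ℤ) := by
      push_cast
      simp
    have hcoeff : Polynomial.coeff (1 - (1 - Polynomial.X) ^ r * S) d
        = PowerSeries.coeff d (1 - (1 - PowerSeries.X) ^ r * (S : PowerSeries ℤ)) := by
      rw [← hco, Polynomial.coeff_coe]
    rw [hcoeff]
    set I : PowerSeries ℤ := (PowerSeries.invOneSubPow ℤ r).val with hI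
    have h1 : ((1 : PowerSeries ℤ) - PowerSeries.X) ^ r * I = 1 := by
      rw [hI, ← PowerSeries.invOneSubPow_inv_eq_one_sub_pow]
      exact (PowerSeries.invOneSubPow ℤ r).inv_val
    have h2 : (1 : PowerSeries ℤ) - (1 - PowerSeries.X) ^ r * (S : PowerSeries ℤ)
        = ((1 : PowerSeries ℤ) - PowerSeries.X) ^ r * (I - (S : PowerSeries ℤ)) := by
      rw [mul_sub, h1]
    rw [h2, PowerSeries.coeff_mul]
    apply Finset.sum_eq_zero
    rintro ⟨i, j⟩ hij
    have hj : j ≤ a := by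
      have := Finset.HasAntidiagonal.mem_antidiagonal.mp hij
      omega
    have hIj : PowerSeries.coeff j I = Nat.choose (r - 1 + j) (r - 1) := by
      rw [hI, PowerSeries.invOneSubPow_val_eq_mk_sub_one_add_choose_of_pos ℤ r hr,
        PowerSeries.coeff_mk]
    have hSj : PowerSeries.coeff j (S : PowerSeries ℤ) = Nat.choose (r - 1 + j) j := by
      rw [Polynomial.coeff_coe, hS]
      rw [Polynomial.finset_sum_coeff]
      simp only [Polynomial.coeff_C_mul, Polynomial.coeff_X_pow]
      rw [Finset.sum_eq_single j]
      · simp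
      · intro b _ hb; simp [Ne.symm hb]
      · intro h; exact absurd (Finset.mem_range.mpr (by omega)) h
    have : PowerSeries.coeff j (I - (S : PowerSeries ℤ)) = 0 := by
      rw [map_sub, hIj, hSj]
      have h2 : Nat.choose (r - 1 + j) (r - 1) = Nat.choose (r - 1 + j) j := by
        have h := Nat.choose_symm (n := r - 1 + j) (k := r - 1) (by omega)
        simpa [Nat.add_sub_cancel_left] using h.symm
      rw [h2]; ring
    simp [this]
  obtain ⟨Q, hQ⟩ := hdvd
  exact ⟨Q, by linear_combination -hQ⟩

lemma padicNorm_pow (p : ℕ) [Fact p.Prime] (q : ℚ) (n : ℕ) :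
    padicNorm p (q ^ n) = padicNorm p q ^ n := by
  induction n with
  | zero => simp [padicNorm.one]
  | succ n ih => rw [pow_succ, pow_succ, padicNorm.mul, ih]

lemma term_bound (p r a j : ℕ) (hp : p.Prime) [Fact p.Prime] (hr : 0 < r) (hj : 0 < j)
    (hjp : j < p) :
    padicNorm p ((1 : ℚ) / ((p : ℚ) - j) ^ r
      - (-1 : ℚ) ^ r * ∑ k ∈ Finset.range (a + 1),
          (Nat.choose (r - 1 + k) k : ℚ) * (p : ℚ) ^ k / (j : ℚ) ^ (r + k))
      ≤ (p : ℚ) ^ (-((a : ℤ) + 1)) := by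
  obtain ⟨Q, hQ⟩ := key_poly r a hr
  have hj0 : (j : ℚ) ≠ 0 := Nat.cast_ne_zero.mpr (by omega)
  have hpj : (j : ℚ) < p := by exact_mod_cast hjp
  have hg0 : (p : ℚ) - j ≠ 0 := by linarith
  set x : ℚ := (p : ℚ) / j with hx
  set y : ℚ := Polynomial.aeval x Q with hy
  -- evaluate polynomial identity at x
  have hid : (1 - x) ^ r * (∑ k ∈ Finset.range (a + 1),
      (Nat.choose (r - 1 + k) k : ℚ) * x ^ k) = 1 - x ^ (a + 1) * y := by
    have := congrArg (fun P : Polynomial ℤ => Polynomial.aeval x P) hQ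
    simpa [map_sub, map_mul, map_pow, map_one, Polynomial.aeval_X, Polynomial.aeval_C,
      map_sum, hy] using this
  -- algebraic identity for the term
  have hterm : (1 : ℚ) / ((p : ℚ) - j) ^ r
      - (-1 : ℚ) ^ r * ∑ k ∈ Finset.range (a + 1),
          (Nat.choose (r - 1 + k) k : ℚ) * (p : ℚ) ^ k / (j : ℚ) ^ (r + k)
      = x ^ (a + 1) * y / ((p : ℚ) - j) ^ r := by
    set T : ℚ := ∑ k ∈ Finset.range (a + 1), (Nat.choose (r - 1 + k) k : ℚ) * x ^ k with hT
    have hjp0 : ((j : ℚ) - p) ≠ 0 := by intro h; apply hg0; linarith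
    have hsum : ∑ k ∈ Finset.range (a + 1),
        (Nat.choose (r - 1 + k) k : ℚ) * (p : ℚ) ^ k / (j : ℚ) ^ (r + k)
        = T / (j : ℚ) ^ r := by
      rw [hT, Finset.sum_div]
      refine Finset.sum_congr rfl fun k _ => ?_
      rw [hx, div_pow, pow_add]
      ring
    rw [hsum]
    have h1x : 1 - x = ((j : ℚ) - p) / j := by rw [hx]; field_simp
    have key2 : ((j : ℚ) - p) ^ r * T = (1 - x ^ (a + 1) * y) * (j : ℚ) ^ r := by
      have h := hid
      rw [h1x, div_pow] at h
      field_simp at h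
      linear_combination h
    have hsign : ((j : ℚ) - p) ^ r = (-1 : ℚ) ^ r * ((p : ℚ) - j) ^ r := by
      rw [← neg_sub ((p : ℚ)) (j : ℚ), neg_pow]
    rw [hsign] at key2
    clear_value x y T
    field_simp
    linear_combination -key2
  rw [hterm]
  -- norm computations
  have hnp : padicNorm p (p : ℚ) = (p : ℚ)⁻¹ := padicNorm.padicNorm_p hp.one_lt
  have hnj : padicNorm p (j : ℚ) = 1 :=
    (padicNorm.nat_eq_one_iff (p := p) j).mpr (Nat.not_dvd_of_pos_of_lt hj hjp)
  have hng : padicNorm p ((p : ℚ) - j) = 1 := by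
    have h1 : ((p - j : ℕ) : ℚ) = (p : ℚ) - j := by
      push_cast [Nat.cast_sub hjp.le]; ring
    rw [← h1]
    exact (padicNorm.nat_eq_one_iff (p := p) (p - j)).mpr
      (Nat.not_dvd_of_pos_of_lt (by omega) (by omega))
  have hnx : padicNorm p x = (p : ℚ)⁻¹ := by
    rw [hx, padicNorm.div, hnp, hnj, div_one]
  have hny : padicNorm p y ≤ 1 := by
    have hppos : (0 : ℚ) < p := by exact_mod_cast hp.pos
    have hxle : padicNorm p x ≤ 1 := by
      rw [hnx]
      rw [inv_le_one_iff₀]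
      right
      exact_mod_cast hp.one_le
    have hyy : y = ∑ i ∈ Finset.range (Q.natDegree + 1), ((Q.coeff i : ℚ)) * x ^ i := by
      rw [hy, Polynomial.aeval_def, Polynomial.eval₂_eq_sum_range]
      simp
    rw [hyy]
    apply padicNorm.sum_le' _ zero_le_one
    intro i _
    rw [padicNorm.mul, padicNorm_pow]
    have h1 : padicNorm p ((Q.coeff i : ℚ)) ≤ 1 := padicNorm.of_int (Q.coeff i)
    have h2 : padicNorm p x ^ i ≤ 1 :=
      pow_le_one₀ (padicNorm.nonneg _) hxle
    calc padicNorm p ((Q.coeff i : ℚ)) * padicNorm p x ^ i ≤ 1 * 1 :=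
          mul_le_mul h1 h2 (pow_nonneg (padicNorm.nonneg _) _) zero_le_one
      _ = 1 := mul_one 1
  have hppos : (0 : ℚ) < p := by exact_mod_cast hp.pos
  calc padicNorm p (x ^ (a + 1) * y / ((p : ℚ) - j) ^ r)
      = (p : ℚ)⁻¹ ^ (a + 1) * padicNorm p y := by
        rw [padicNorm.div, padicNorm.mul, padicNorm_pow, padicNorm_pow, hnx, hng,
          one_pow, div_one]
    _ ≤ (p : ℚ)⁻¹ ^ (a + 1) * 1 := by
        apply mul_le_mul_of_nonneg_left hny
        positivity
    _ = (p : ℚ) ^ (-((a : ℤ) + 1)) := by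
        have hc : (-((a : ℤ) + 1)) = -((a + 1 : ℕ) : ℤ) := by push_cast; ring
        rw [mul_one, hc, zpow_neg, zpow_natCast, inv_pow]

lemma pcong_of_padicNorm_le (p m : ℕ) [Fact p.Prime] (x y : ℚ)
    (h : padicNorm p (x - y) ≤ (p : ℚ) ^ (-(m : ℤ))) : pcong p m x y := by
  by_cases hxy : x = y
  · exact Or.inl hxy
  · right
    have hne : x - y ≠ 0 := sub_ne_zero.mpr hxy
    rw [padicNorm.eq_zpow_of_nonzero hne] at h
    have hp1 : (1 : ℚ) < p := by
      exact_mod_cast (Fact.out : p.Prime).one_lt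
    have := (zpow_le_zpow_iff_right₀ hp1).mp h
    omega

theorem stmt5 (p r a : ℕ) (hr : 0 < r) (ha : 0 < a) (hp : p.Prime) (hpr : r + 2 < p) :
    pcong p (a + 1) (Hs (p - 1) r)
      (Hs ((p - 1) / 2) r + (-1 : ℚ) ^ r *
        ∑ k ∈ Finset.range (a + 1),
          (Nat.choose (r - 1 + k) k : ℚ) * Hs ((p - 1) / 2) (r + k) * (p : ℚ) ^ k) := by
  haveI : Fact p.Prime := ⟨hp⟩
  set m := (p - 1) / 2 with hm
  have hodd : Odd p := hp.odd_of_ne_two (by omega)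
  have hpm : p = 2 * m + 1 := by
    obtain ⟨t, ht⟩ := hodd
    omega
  have hppos : (0 : ℚ) < p := by exact_mod_cast hp.pos
  apply pcong_of_padicNorm_le
  have hdiff : Hs (p - 1) r - (Hs m r + (-1 : ℚ) ^ r *
        ∑ k ∈ Finset.range (a + 1),
          (Nat.choose (r - 1 + k) k : ℚ) * Hs m (r + k) * (p : ℚ) ^ k)
      = ∑ j ∈ Finset.Icc 1 m, ((1 : ℚ) / ((p : ℚ) - j) ^ r
          - (-1 : ℚ) ^ r * ∑ k ∈ Finset.range (a + 1),
              (Nat.choose (r - 1 + k) k : ℚ) * (p : ℚ) ^ k / (j : ℚ) ^ (r + k)) := by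
    have h1 : Hs (p - 1) r = Hs m r + ∑ j ∈ Finset.Icc 1 m, (1 : ℚ) / ((p : ℚ) - j) ^ r := by
      unfold Hs
      have e1 : Finset.Icc 1 (p - 1) = Finset.Ioc 0 (p - 1) := by rw [← Finset.Icc_add_one_left_eq_Ioc]; rfl
      have e2 : Finset.Icc 1 m = Finset.Ioc 0 m := by rw [← Finset.Icc_add_one_left_eq_Ioc]; rfl
      rw [e1, ← Finset.sum_Ioc_consecutive _ (Nat.zero_le m) (show m ≤ p - 1 by omega), ← e2]
      congr 1
      refine Finset.sum_bij' (fun k _ => p - k) (fun j _ => p - j) ?_ ?_ ?_ ?_ ?_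
      · intro k hk
        rw [Finset.mem_Ioc] at hk
        show p - k ∈ Finset.Icc 1 m
        rw [Finset.mem_Icc]
        omega
      · intro j hj
        rw [Finset.mem_Icc] at hj
        show p - j ∈ Finset.Ioc m (p - 1)
        rw [Finset.mem_Ioc]
        omega
      · intro k hk
        rw [Finset.mem_Ioc] at hk
        show p - (p - k) = k
        omega
      · intro j hj
        rw [Finset.mem_Icc] at hj
        show p - (p - j) = j
        omega
      · intro k hk
        rw [Finset.mem_Ioc] at hk
        show (1 : ℚ) / (k : ℚ) ^ r = 1 / ((p : ℚ) - (p - k : ℕ)) ^ r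
        have : ((p - k : ℕ) : ℚ) = (p : ℚ) - k := by
          push_cast [Nat.cast_sub (by omega : k ≤ p)]
          ring
        rw [this]
        congr 2
        ring
    have h2 : ∑ k ∈ Finset.range (a + 1),
          (Nat.choose (r - 1 + k) k : ℚ) * Hs m (r + k) * (p : ℚ) ^ k
        = ∑ j ∈ Finset.Icc 1 m, ∑ k ∈ Finset.range (a + 1),
            (Nat.choose (r - 1 + k) k : ℚ) * (p : ℚ) ^ k / (j : ℚ) ^ (r + k) := by
      rw [Finset.sum_comm]
      refine Finset.sum_congr rfl fun k _ => ?_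
      unfold Hs
      rw [Finset.mul_sum, Finset.sum_mul]
      refine Finset.sum_congr rfl fun j _ => ?_
      ring
    rw [h1, h2, Finset.mul_sum, Finset.sum_sub_distrib]
    ring
  rw [hdiff]
  apply padicNorm.sum_le' _ (by positivity)
  intro j hj
  rw [Finset.mem_Icc] at hj
  have hb := term_bound p r a j hp hr (by omega) (by omega)
  have hexp : ((p : ℚ)) ^ (-((a : ℤ) + 1)) = (p : ℚ) ^ (-((a + 1 : ℕ) : ℤ)) := by
    congr 1
  rw [hexp] at hb
  exact hb
end

section
/- Let p be an odd prime, set n = (p−1)/2, and let r, s ≥ 1 be integers. Then \overline{H}_n(r,s) ≡ (1/(−2)^{r+s}) · ( H_n(s,r) + (p/2)·( r·H_n(s,r+1) + s·H_n(s+1,r) ) + (p²/4)·( binom(r+1,2)·H_n(s,r+2) + r·s·H_n(s+1,r+1) + binom(s+1,2)·H_n(s+2,r) ) ) (mod p³). -/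
/-- Double harmonic sum `H_n(a,b) = ∑_{0<i<j≤n} 1/(i^a j^b)`. -/
def H2s (n a b : ℕ) : ℚ := ∑ j ∈ Finset.Icc 1 n, ∑ i ∈ Finset.Ico 1 j, 1 / ((i : ℚ) ^ a * (j : ℚ) ^ b)

/-- Odd double harmonic sum `\overline{H}_n(a,b) = ∑_{0≤i<j<n} 1/((2i+1)^a (2j+1)^b)`. -/
def oH2 (n a b : ℕ) : ℚ :=
  ∑ j ∈ Finset.range n, ∑ i ∈ Finset.range j,
    1 / ((2 * (i : ℚ) + 1) ^ a * (2 * (j : ℚ) + 1) ^ b)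

/- ### Auxiliary lemmas -/

/-- `x = 0` or `v_p(x) ≥ 3`. -/
def P3aux (p : ℕ) (x : ℚ) : Prop := x = 0 ∨ (3:ℤ) ≤ padicValRat p x

lemma P3aux_zero (p : ℕ) : P3aux p 0 := Or.inl rfl

lemma P3aux_add {p : ℕ} [Fact p.Prime] {x y : ℚ} (hx : P3aux p x) (hy : P3aux p y) :
    P3aux p (x + y) := by
  rcases hx with rfl | hx
  · simpa using hy
  rcases hy with rfl | hy
  · rw [add_zero]; exact Or.inr hx
  by_cases h : x + y = 0
  · exact Or.inl h
  · exact Or.inr (le_trans (le_min hx hy) (padicValRat.min_le_padicValRat_add h))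

lemma P3aux_sum {p : ℕ} [Fact p.Prime] {ι : Type*} (t : Finset ι) (f : ι → ℚ)
    (h : ∀ i ∈ t, P3aux p (f i)) : P3aux p (∑ i ∈ t, f i) :=
  Finset.sum_induction f (P3aux p) (fun _ _ => P3aux_add) (P3aux_zero p) h

lemma P3aux_of_frac {p : ℕ} [Fact p.Prime] {N D : ℤ} (hN : (p:ℤ)^3 ∣ N) (hD : ¬ (p:ℤ) ∣ D)
    (hD0 : D ≠ 0) : P3aux p ((N:ℚ) / (D:ℚ)) := by
  rcases eq_or_ne N 0 with rfl | hN0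
  · simp [P3aux]
  right
  have hDq : (D:ℚ) ≠ 0 := Int.cast_ne_zero.mpr hD0
  have hNq : (N:ℚ) ≠ 0 := Int.cast_ne_zero.mpr hN0
  rw [padicValRat.div hNq hDq, padicValRat.of_int, padicValRat.of_int,
    padicValInt.eq_zero_of_not_dvd hD]
  have : 3 ≤ padicValInt p N := ((padicValInt_dvd_iff 3 N).mp hN).resolve_left hN0
  simpa using this

lemma lvl1aux (p : ℕ) (k : ℤ) (m : ℕ) : ((p:ℤ) - 2*k)^m ≡ (-(2*k))^m [ZMOD (p:ℤ)] := by
  refine Int.ModEq.pow m ?_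
  have : (p:ℤ) ≡ 0 [ZMOD (p:ℤ)] := (Int.modEq_zero_iff_dvd).mpr dvd_rfl
  simpa using this.sub_right (2*k)

lemma lvl2aux (p : ℕ) (k : ℤ) (m : ℕ) :
    (2*k + m*p) * ((p:ℤ) - 2*k)^m ≡ 2*k*(-(2*k))^m [ZMOD (p:ℤ)^2] := by
  induction m with
  | zero => simp
  | succ m ih =>
    have h1 : (p:ℤ) * ((p:ℤ) - 2*k)^(m+1) ≡ (p:ℤ) * (-(2*k))^(m+1) [ZMOD (p:ℤ) * (p:ℤ)] :=
      (lvl1aux p k (m+1)).mul_left' (c := (p:ℤ))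
    have h1' : (p:ℤ) * ((p:ℤ) - 2*k)^(m+1) ≡ (p:ℤ) * (-(2*k))^(m+1) [ZMOD (p:ℤ)^2] := by
      simpa [sq] using h1
    calc (2*k + (m+1:ℕ)*p) * ((p:ℤ) - 2*k)^(m+1)
        = (2*k + m*p) * ((p:ℤ) - 2*k)^m * ((p:ℤ) - 2*k) + (p:ℤ) * ((p:ℤ)-2*k)^(m+1) := by
          push_cast; ring
      _ ≡ 2*k*(-(2*k))^m * ((p:ℤ) - 2*k) + (p:ℤ) * (-(2*k))^(m+1) [ZMOD (p:ℤ)^2] :=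
          (ih.mul_right _).add h1'
      _ = 2*k*(-(2*k))^(m+1) := by ring

lemma lvl3aux (p : ℕ) (k : ℤ) (m : ℕ) :
    (4*k^2 + 2*k*m*p + ((m+1).choose 2 : ℤ)*p^2) * ((p:ℤ) - 2*k)^m
      ≡ 4*k^2*(-(2*k))^m [ZMOD (p:ℤ)^3] := by
  induction m with
  | zero => simp
  | succ m ih =>
    have h2 : (p:ℤ) * ((2*k + (m+1:ℕ)*p) * ((p:ℤ) - 2*k)^(m+1))
        ≡ (p:ℤ) * (2*k*(-(2*k))^(m+1)) [ZMOD (p:ℤ) * (p:ℤ)^2] :=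
      (lvl2aux p k (m+1)).mul_left' (c := (p:ℤ))
    have h2' : (p:ℤ) * ((2*k + (m+1:ℕ)*p) * ((p:ℤ) - 2*k)^(m+1))
        ≡ (p:ℤ) * (2*k*(-(2*k))^(m+1)) [ZMOD (p:ℤ)^3] := by
      simpa [pow_succ, pow_two, mul_assoc, mul_comm] using h2
    have hch : ((m+2).choose 2 : ℤ) = ((m+1).choose 2 : ℤ) + (m+1) := by
      rw [Nat.choose_succ_succ (m+1) 1]
      push_cast [Nat.choose_one_right]
      ring
    calc (4*k^2 + 2*k*(m+1:ℕ)*p + ((m+2).choose 2 : ℤ)*p^2) * ((p:ℤ) - 2*k)^(m+1)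
        = (4*k^2 + 2*k*m*p + ((m+1).choose 2 : ℤ)*p^2) * ((p:ℤ) - 2*k)^m * ((p:ℤ) - 2*k)
          + (p:ℤ) * ((2*k + (m+1:ℕ)*p) * ((p:ℤ) - 2*k)^(m+1)) := by
          rw [hch]; push_cast; ring
      _ ≡ 4*k^2*(-(2*k))^m * ((p:ℤ) - 2*k) + (p:ℤ) * (2*k*(-(2*k))^(m+1)) [ZMOD (p:ℤ)^3] :=
          (ih.mul_right _).add h2'
      _ = 4*k^2*(-(2*k))^(m+1) := by ring

lemma not_dvd_mul_aux {q x y : ℤ} (hq : Prime q) (hx : ¬ q ∣ x) (hy : ¬ q ∣ y) : ¬ q ∣ x * y :=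
  fun h => (hq.dvd_mul.mp h).elim hx hy

lemma pair_lemma_aux (p n a b r s : ℕ) (hp : p.Prime) (hpn : p = 2*n+1)
    (ha : 1 ≤ a) (hab : a < b) (hb : b ≤ n) :
    P3aux p (1 / (((p:ℚ) - 2*a)^s * ((p:ℚ) - 2*b)^r)
      - (1/(-2:ℚ)^(r+s)) * (1/((a:ℚ)^s*(b:ℚ)^r)
        + ((p:ℚ)/2)*((r:ℚ) * (1/((a:ℚ)^s*(b:ℚ)^(r+1))) + (s:ℚ)*(1/((a:ℚ)^(s+1)*(b:ℚ)^r)))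
        + ((p:ℚ)^2/4)*(((r+1).choose 2 : ℚ) * (1/((a:ℚ)^s*(b:ℚ)^(r+2)))
            + (r:ℚ)*(s:ℚ)*(1/((a:ℚ)^(s+1)*(b:ℚ)^(r+1)))
            + ((s+1).choose 2 : ℚ)*(1/((a:ℚ)^(s+2)*(b:ℚ)^r))))) := by
  haveI : Fact p.Prime := ⟨hp⟩
  set A : ℤ := (p:ℤ) - 2*a with hAdef
  set B : ℤ := (p:ℤ) - 2*b with hBdef
  set C1 : ℤ := ((s+1).choose 2 : ℤ) with hC1
  set C2 : ℤ := ((r+1).choose 2 : ℤ) with hC2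
  set Ma : ℤ := 4*(a:ℤ)^2 + 2*a*s*p + C1*p^2 with hMa
  set Mb : ℤ := 4*(b:ℤ)^2 + 2*b*r*p + C2*p^2 with hMb
  set D : ℤ := 16 * (a:ℤ)^(s+2) * (b:ℤ)^(r+2) * A^s * B^r * (-2)^(r+s) with hD
  set N : ℤ := (16*(-2)^(r+s)*(a:ℤ)^(s+2)*(b:ℤ)^(r+2) - Ma*Mb*A^s*B^r)
      + (p:ℤ)^3*((2*a*s*C2 + 2*b*r*C1 + C1*C2*p)*A^s*B^r) with hN
  have key : Ma * A^s ≡ 4*(a:ℤ)^2*(-(2*a))^s [ZMOD (p:ℤ)^3] := lvl3aux p a s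
  have key2 : Mb * B^r ≡ 4*(b:ℤ)^2*(-(2*b))^r [ZMOD (p:ℤ)^3] := lvl3aux p b r
  have keym := key.mul key2
  have hdvd1 : (p:ℤ)^3 ∣ 4*(a:ℤ)^2*(-(2*a))^s * (4*(b:ℤ)^2*(-(2*b))^r) - Ma * A^s * (Mb * B^r) :=
    Int.ModEq.dvd keym
  have hrw : 4*(a:ℤ)^2*(-(2*a))^s * (4*(b:ℤ)^2*(-(2*b))^r)
      = 16*(-2)^(r+s)*(a:ℤ)^(s+2)*(b:ℤ)^(r+2) := by
    simp only [neg_mul_eq_neg_mul, mul_pow, pow_add]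
    ring
  have hNdvd : (p:ℤ)^3 ∣ N := by
    rw [hN]
    refine dvd_add ?_ ⟨(2*a*s*C2 + 2*b*r*C1 + C1*C2*p)*A^s*B^r, rfl⟩
    rw [← hrw]
    simpa [mul_assoc, mul_comm, mul_left_comm] using hdvd1
  have hage : (1:ℤ) ≤ (a:ℤ) := by exact_mod_cast ha
  have hbge : (1:ℤ) ≤ (b:ℤ) := by omega
  have haltp : (a:ℤ) < p := by
    have : a < p := by omega
    exact_mod_cast this
  have hbltp : (b:ℤ) < p := by
    have : b < p := by omega
    exact_mod_cast this
  have hA1 : (1:ℤ) ≤ A := by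
    have h2a : (2*a:ℤ) ≤ 2*n := by
      exact_mod_cast Nat.mul_le_mul_left 2 (le_of_lt (lt_of_lt_of_le hab hb))
    have : (p:ℤ) = 2*n+1 := by exact_mod_cast hpn
    omega
  have hB1 : (1:ℤ) ≤ B := by
    have h2b : (2*b:ℤ) ≤ 2*n := by exact_mod_cast Nat.mul_le_mul_left 2 hb
    have : (p:ℤ) = 2*n+1 := by exact_mod_cast hpn
    omega
  have hAp : A < p := by
    have : (0:ℤ) < 2*a := by omega
    omega
  have hBp : B < p := by
    have : (0:ℤ) < 2*b := by omega
    omega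
  have hpint : Prime (p:ℤ) := Nat.prime_iff_prime_int.mp hp
  have hnd : ∀ x : ℤ, 0 < x → x < p → ¬ (p:ℤ) ∣ x := fun x hx hxp h =>
    absurd (Int.le_of_dvd hx h) (by omega)
  have hnd2 : ¬ (p:ℤ) ∣ 2 := by
    refine hnd 2 (by norm_num) ?_
    have : 2 < p := by omega
    exact_mod_cast this
  have hndD : ¬ (p:ℤ) ∣ D := by
    rw [hD]
    refine not_dvd_mul_aux hpint (not_dvd_mul_aux hpint (not_dvd_mul_aux hpint
      (not_dvd_mul_aux hpint (not_dvd_mul_aux hpint ?_ ?_) ?_) ?_) ?_) ?_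
    · intro h
      have : (16:ℤ) = 2^4 := by norm_num
      exact hnd2 (hpint.dvd_of_dvd_pow (this ▸ h))
    · exact fun h => hnd a (by omega) haltp (hpint.dvd_of_dvd_pow h)
    · exact fun h => hnd b (by omega) hbltp (hpint.dvd_of_dvd_pow h)
    · exact fun h => hnd A (by omega) hAp (hpint.dvd_of_dvd_pow h)
    · exact fun h => hnd B (by omega) hBp (hpint.dvd_of_dvd_pow h)
    · intro h
      have := hpint.dvd_of_dvd_pow h
      rw [Int.dvd_neg] at this
      exact hnd2 this
  have hD0 : D ≠ 0 := by
    rw [hD]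
    positivity
  have haQ : (a:ℚ) ≠ 0 := by positivity
  have hbQ : (b:ℚ) ≠ 0 := by
    have : 0 < b := by omega
    positivity
  have hAQ : ((p:ℚ) - 2*a) ≠ 0 := by
    have : ((A:ℤ):ℚ) = (p:ℚ) - 2*a := by push_cast [hAdef]; ring
    rw [← this]
    exact_mod_cast (by omega : A ≠ 0)
  have hBQ : ((p:ℚ) - 2*b) ≠ 0 := by
    have : ((B:ℤ):ℚ) = (p:ℚ) - 2*b := by push_cast [hBdef]; ring
    rw [← this]
    exact_mod_cast (by omega : B ≠ 0)
  have heq : (1 / (((p:ℚ) - 2*a)^s * ((p:ℚ) - 2*b)^r)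
      - (1/(-2:ℚ)^(r+s)) * (1/((a:ℚ)^s*(b:ℚ)^r)
        + ((p:ℚ)/2)*((r:ℚ) * (1/((a:ℚ)^s*(b:ℚ)^(r+1))) + (s:ℚ)*(1/((a:ℚ)^(s+1)*(b:ℚ)^r)))
        + ((p:ℚ)^2/4)*(((r+1).choose 2 : ℚ) * (1/((a:ℚ)^s*(b:ℚ)^(r+2)))
            + (r:ℚ)*(s:ℚ)*(1/((a:ℚ)^(s+1)*(b:ℚ)^(r+1)))
            + ((s+1).choose 2 : ℚ)*(1/((a:ℚ)^(s+2)*(b:ℚ)^r))))) = (N:ℚ) / (D:ℚ) := by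
    rw [eq_div_iff (by exact_mod_cast hD0)]
    push_cast [hN, hD, hMa, hMb, hC1, hC2, hAdef, hBdef]
    simp only [pow_add, pow_succ]
    field_simp
    ring
  rw [heq]
  exact P3aux_of_frac hNdvd hndD hD0

lemma stepA_aux (p n r s : ℕ) (hpn : p = 2*n+1) :
    (∑ j ∈ Finset.range n, ∑ i ∈ Finset.range j,
      1 / ((2 * (i : ℚ) + 1) ^ r * (2 * (j : ℚ) + 1) ^ s))
    = ∑ b ∈ Finset.Icc 1 n, ∑ a ∈ Finset.Ico 1 b,
      1 / (((p:ℚ) - 2*a)^s * ((p:ℚ) - 2*b)^r) := by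
  rw [Finset.sum_sigma', Finset.sum_sigma']
  refine Finset.sum_nbij' (fun x => ⟨n - x.2, n - x.1⟩) (fun y => ⟨n - y.2, n - y.1⟩) ?_ ?_ ?_ ?_ ?_
  · rintro ⟨j, i⟩ hx
    simp only [Finset.mem_sigma, Finset.mem_range] at hx
    simp only [Finset.mem_sigma, Finset.mem_Icc, Finset.mem_Ico]
    omega
  · rintro ⟨b, a⟩ hy
    simp only [Finset.mem_sigma, Finset.mem_Icc, Finset.mem_Ico] at hy
    simp only [Finset.mem_sigma, Finset.mem_range]
    omega
  · rintro ⟨j, i⟩ hx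
    simp only [Finset.mem_sigma, Finset.mem_range] at hx
    ext <;> simp <;> omega
  · rintro ⟨b, a⟩ hy
    simp only [Finset.mem_sigma, Finset.mem_Icc, Finset.mem_Ico] at hy
    ext <;> simp <;> omega
  · rintro ⟨j, i⟩ hx
    simp only [Finset.mem_sigma, Finset.mem_range] at hx
    have h1 : ((n - i : ℕ) : ℚ) = (n:ℚ) - i := by
      rw [Nat.cast_sub (by omega)]
    have h2 : ((n - j : ℕ) : ℚ) = (n:ℚ) - j := by
      rw [Nat.cast_sub (by omega)]
    have hp : (p:ℚ) = 2*n+1 := by exact_mod_cast hpn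
    simp only [h1, h2, hp]
    ring_nf

lemma stepB_aux (p n r s : ℕ) :
    ((1 / (-2 : ℚ) ^ (r + s)) *
        (H2s n s r
          + ((p : ℚ) / 2) * (r * H2s n s (r + 1) + s * H2s n (s + 1) r)
          + ((p : ℚ) ^ 2 / 4) * ((Nat.choose (r + 1) 2 : ℚ) * H2s n s (r + 2)
              + r * s * H2s n (s + 1) (r + 1)
              + (Nat.choose (s + 1) 2 : ℚ) * H2s n (s + 2) r)))
    = ∑ b ∈ Finset.Icc 1 n, ∑ a ∈ Finset.Ico 1 b,
      (1/(-2:ℚ)^(r+s)) * (1/((a:ℚ)^s*(b:ℚ)^r)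
        + ((p:ℚ)/2)*((r:ℚ) * (1/((a:ℚ)^s*(b:ℚ)^(r+1))) + (s:ℚ)*(1/((a:ℚ)^(s+1)*(b:ℚ)^r)))
        + ((p:ℚ)^2/4)*(((r+1).choose 2 : ℚ) * (1/((a:ℚ)^s*(b:ℚ)^(r+2)))
            + (r:ℚ)*(s:ℚ)*(1/((a:ℚ)^(s+1)*(b:ℚ)^(r+1)))
            + ((s+1).choose 2 : ℚ)*(1/((a:ℚ)^(s+2)*(b:ℚ)^r)))) := by
  simp only [H2s, Finset.mul_sum, ← Finset.sum_add_distrib]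

theorem stmt7 (p : ℕ) (hp : p.Prime) (hodd : Odd p) (r s : ℕ) (hr : 1 ≤ r) (hs : 1 ≤ s) :
    pcong p 3 (oH2 ((p - 1) / 2) r s)
      ((1 / (-2 : ℚ) ^ (r + s)) *
        (H2s ((p - 1) / 2) s r
          + ((p : ℚ) / 2) * (r * H2s ((p - 1) / 2) s (r + 1) + s * H2s ((p - 1) / 2) (s + 1) r)
          + ((p : ℚ) ^ 2 / 4) * ((Nat.choose (r + 1) 2 : ℚ) * H2s ((p - 1) / 2) s (r + 2)
              + r * s * H2s ((p - 1) / 2) (s + 1) (r + 1)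
              + (Nat.choose (s + 1) 2 : ℚ) * H2s ((p - 1) / 2) (s + 2) r))) := by
  haveI : Fact p.Prime := ⟨hp⟩
  obtain ⟨m, hm⟩ := hodd
  set n := (p - 1) / 2 with hn
  have hpn : p = 2*n+1 := by omega
  have hX := stepA_aux p n r s hpn
  have hY := stepB_aux p n r s
  rw [oH2] at *
  have hdiff : (∑ j ∈ Finset.range n, ∑ i ∈ Finset.range j,
        1 / ((2 * (i : ℚ) + 1) ^ r * (2 * (j : ℚ) + 1) ^ s))
      - ((1 / (-2 : ℚ) ^ (r + s)) *
        (H2s n s r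
          + ((p : ℚ) / 2) * (r * H2s n s (r + 1) + s * H2s n (s + 1) r)
          + ((p : ℚ) ^ 2 / 4) * ((Nat.choose (r + 1) 2 : ℚ) * H2s n s (r + 2)
              + r * s * H2s n (s + 1) (r + 1)
              + (Nat.choose (s + 1) 2 : ℚ) * H2s n (s + 2) r)))
      = ∑ b ∈ Finset.Icc 1 n, ∑ a ∈ Finset.Ico 1 b,
        (1 / (((p:ℚ) - 2*a)^s * ((p:ℚ) - 2*b)^r)
        - (1/(-2:ℚ)^(r+s)) * (1/((a:ℚ)^s*(b:ℚ)^r)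
          + ((p:ℚ)/2)*((r:ℚ) * (1/((a:ℚ)^s*(b:ℚ)^(r+1))) + (s:ℚ)*(1/((a:ℚ)^(s+1)*(b:ℚ)^r)))
          + ((p:ℚ)^2/4)*(((r+1).choose 2 : ℚ) * (1/((a:ℚ)^s*(b:ℚ)^(r+2)))
              + (r:ℚ)*(s:ℚ)*(1/((a:ℚ)^(s+1)*(b:ℚ)^(r+1)))
              + ((s+1).choose 2 : ℚ)*(1/((a:ℚ)^(s+2)*(b:ℚ)^r))))) := by
    rw [hX, hY]
    simp only [← Finset.sum_sub_distrib]
  have h3 : P3aux p (∑ b ∈ Finset.Icc 1 n, ∑ a ∈ Finset.Ico 1 b,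
        (1 / (((p:ℚ) - 2*a)^s * ((p:ℚ) - 2*b)^r)
        - (1/(-2:ℚ)^(r+s)) * (1/((a:ℚ)^s*(b:ℚ)^r)
          + ((p:ℚ)/2)*((r:ℚ) * (1/((a:ℚ)^s*(b:ℚ)^(r+1))) + (s:ℚ)*(1/((a:ℚ)^(s+1)*(b:ℚ)^r)))
          + ((p:ℚ)^2/4)*(((r+1).choose 2 : ℚ) * (1/((a:ℚ)^s*(b:ℚ)^(r+2)))
              + (r:ℚ)*(s:ℚ)*(1/((a:ℚ)^(s+1)*(b:ℚ)^(r+1)))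
              + ((s+1).choose 2 : ℚ)*(1/((a:ℚ)^(s+2)*(b:ℚ)^r)))))) := by
    refine P3aux_sum _ _ fun b hb => P3aux_sum _ _ fun a ha => ?_
    rw [Finset.mem_Icc] at hb
    rw [Finset.mem_Ico] at ha
    exact pair_lemma_aux p n a b r s hp hpn ha.1 ha.2 hb.2
  rcases h3 with h | h
  · exact Or.inl (sub_eq_zero.mp (hdiff.trans h))
  · refine Or.inr ?_
    rw [hdiff]
    exact h
end

section
/- For every non-negative integer n and every real number t, ∫_0^t w_n(1 − τ²/2) dτ = 2·Σ_{k=0}^{n-1} (−1)^k·v_{2k+1}(t)/(2k+1) + (−1)^n·v_{2n+1}(t)/(2n+1). -/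
/-- Lucas sequence `v_n(x)` of real argument: `v_0 = 2`, `v_1 = x`, `v_n = x v_{n-1} - v_{n-2}`. -/
noncomputable def lucasVR (x : ℝ) : ℕ → ℝ
  | 0 => 2
  | 1 => x
  | n + 2 => x * lucasVR x (n + 1) - lucasVR x n

/-- The sequence `w_n(x)` of real argument: `w_0 = 1`, `w_1 = 1 + 2x`, `w_{n+1} = 2x w_n - w_{n-1}`. -/
noncomputable def wSeqR (x : ℝ) : ℕ → ℝ
  | 0 => 1
  | 1 => 1 + 2 * x
  | n + 2 => 2 * x * wSeqR x (n + 1) - wSeqR x n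

/-- Lucas sequence `u_n(x)`. -/
noncomputable def lucasUR (x : ℝ) : ℕ → ℝ
  | 0 => 0
  | 1 => 1
  | n + 2 => x * lucasUR x (n + 1) - lucasUR x n

lemma lucasUR_cont : ∀ m : ℕ, Continuous fun t : ℝ => lucasUR t m := by
  intro m
  induction m using Nat.twoStepInduction with
  | zero => exact continuous_const
  | one => exact continuous_const
  | more n ih0 ih1 =>
    show Continuous fun t : ℝ => t * lucasUR t (n + 1) - lucasUR t n
    exact (continuous_id.mul ih1).sub ih0

lemma lucasVR_eq_uv (n : ℕ) (x : ℝ) :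
    lucasVR x (n + 1) = x * lucasUR x (n + 1) - 2 * lucasUR x n := by
  induction n using Nat.twoStepInduction with
  | zero => simp [lucasVR, lucasUR]
  | one =>
    show x * lucasVR x 1 - lucasVR x 0 = x * (x * lucasUR x 1 - lucasUR x 0) - 2 * lucasUR x 1
    simp [lucasVR, lucasUR]
  | more n ih0 ih1 =>
    show x * lucasVR x (n + 2) - lucasVR x (n + 1)
        = x * lucasUR x (n + 3) - 2 * lucasUR x (n + 2)
    rw [ih0, ih1]
    show _ = x * (x * lucasUR x (n + 2) - lucasUR x (n + 1))
        - 2 * (x * lucasUR x (n + 1) - lucasUR x n)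
    ring

lemma lucasVR_hasDeriv (m : ℕ) (x : ℝ) :
    HasDerivAt (fun y => lucasVR y m) ((m : ℝ) * lucasUR x m) x := by
  induction m using Nat.twoStepInduction with
  | zero => simpa [lucasVR, lucasUR] using hasDerivAt_const x (2 : ℝ)
  | one => simpa [lucasVR, lucasUR] using hasDerivAt_id' x
  | more n ih0 ih1 =>
    have h : HasDerivAt (fun y => y * lucasVR y (n + 1) - lucasVR y n)
        (1 * lucasVR x (n + 1) + x * (((n : ℝ) + 1) * lucasUR x (n + 1))
          - (n : ℝ) * lucasUR x n) x := by
      have := ((hasDerivAt_id' x).fun_mul ih1).fun_sub ih0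
      push_cast at this ⊢
      exact this
    have key : (1 : ℝ) * lucasVR x (n + 1) + x * (((n : ℝ) + 1) * lucasUR x (n + 1))
          - (n : ℝ) * lucasUR x n
        = ((n + 2 : ℕ) : ℝ) * lucasUR x (n + 2) := by
      rw [lucasVR_eq_uv]
      show _ = ((n + 2 : ℕ) : ℝ) * (x * lucasUR x (n + 1) - lucasUR x n)
      push_cast
      ring
    rw [key] at h
    exact h

lemma lucasVR_odd_zero (n : ℕ) : lucasVR 0 (2 * n + 1) = 0 := by
  induction n with
  | zero => simp [lucasVR]
  | succ n ih =>
    have e : 2 * (n + 1) + 1 = (2 * n + 1) + 2 := by ring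
    rw [e]
    show (0 : ℝ) * lucasVR 0 (2 * n + 1 + 1) - lucasVR 0 (2 * n + 1) = 0
    rw [ih]; ring

lemma sum_u (n : ℕ) (t : ℝ) :
    t * ∑ k ∈ Finset.range n, (-1 : ℝ) ^ k * lucasUR t (2 * k + 1)
      = (-1 : ℝ) ^ n * (lucasUR t (2 * n + 2) - t * lucasUR t (2 * n + 1)) := by
  induction n with
  | zero =>
    show t * 0 = 1 * (t * lucasUR t 1 - lucasUR t 0 - t * lucasUR t 1)
    simp [lucasUR]
  | succ n ih =>
    rw [Finset.sum_range_succ, mul_add, ih]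
    have e4 : 2 * (n + 1) + 2 = (2 * n + 2) + 2 := by ring
    have e3 : 2 * (n + 1) + 1 = (2 * n + 1) + 2 := by ring
    rw [e4, e3]
    show _ = (-1 : ℝ) ^ (n + 1) *
      (t * lucasUR t (2 * n + 3) - lucasUR t (2 * n + 2)
        - t * (t * lucasUR t (2 * n + 2) - lucasUR t (2 * n + 1)))
    have h3 : lucasUR t (2 * n + 3)
        = t * lucasUR t (2 * n + 2) - lucasUR t (2 * n + 1) := rfl
    rw [h3]
    ring

lemma w_eq_u (n : ℕ) (t : ℝ) :
    wSeqR (1 - t ^ 2 / 2) n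
      = 2 * ∑ k ∈ Finset.range n, (-1 : ℝ) ^ k * lucasUR t (2 * k + 1)
        + (-1 : ℝ) ^ n * lucasUR t (2 * n + 1) := by
  induction n using Nat.twoStepInduction with
  | zero => simp [wSeqR, lucasUR]
  | one =>
    show (1 : ℝ) + 2 * (1 - t ^ 2 / 2)
        = 2 * ∑ k ∈ Finset.range 1, (-1 : ℝ) ^ k * lucasUR t (2 * k + 1)
          + (-1 : ℝ) ^ 1 * (t * (t * lucasUR t 1 - lucasUR t 0) - lucasUR t 1)
    simp [lucasUR]
    ring
  | more n ih0 ih1 =>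
    have e5 : 2 * (n + 2) + 1 = (2 * n + 3) + 2 := by ring
    have e3 : 2 * (n + 1) + 1 = (2 * n + 1) + 2 := by ring
    have hu5 : lucasUR t (2 * (n + 2) + 1)
        = t * lucasUR t (2 * n + 4) - lucasUR t (2 * n + 3) := by rw [e5]; rfl
    have hu4 : lucasUR t (2 * n + 4)
        = t * lucasUR t (2 * n + 3) - lucasUR t (2 * n + 2) := rfl
    have hu3 : lucasUR t (2 * n + 3)
        = t * lucasUR t (2 * n + 2) - lucasUR t (2 * n + 1) := rfl
    have hq := sum_u n t
    show 2 * (1 - t ^ 2 / 2) * wSeqR (1 - t ^ 2 / 2) (n + 1) - wSeqR (1 - t ^ 2 / 2) n = _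
    rw [ih0, ih1, Finset.sum_range_succ (n := n + 1), Finset.sum_range_succ (n := n),
      hu5, hu4, hu3, e3, hu3]
    have hu2 : lucasUR t (2 * n + 2)
        = t * lucasUR t (2 * n + 1) - lucasUR t (2 * n) := rfl
    linear_combination (-2 * t) * hq

theorem stmt14 (n : ℕ) (t : ℝ) :
    ∫ τ in (0:ℝ)..t, wSeqR (1 - τ ^ 2 / 2) n
      = 2 * ∑ k ∈ Finset.range n, (-1 : ℝ) ^ k * lucasVR t (2 * k + 1) / (2 * (k : ℝ) + 1)
        + (-1 : ℝ) ^ n * lucasVR t (2 * n + 1) / (2 * (n : ℝ) + 1) := by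
  set F : ℝ → ℝ := fun s =>
    2 * ∑ k ∈ Finset.range n, (-1 : ℝ) ^ k * lucasVR s (2 * k + 1) / (2 * (k : ℝ) + 1)
      + (-1 : ℝ) ^ n * lucasVR s (2 * n + 1) / (2 * (n : ℝ) + 1) with hF
  have hterm : ∀ (x : ℝ) (m : ℕ), HasDerivAt
      (fun s => (-1 : ℝ) ^ m * lucasVR s (2 * m + 1) / (2 * (m : ℝ) + 1))
      ((-1 : ℝ) ^ m * lucasUR x (2 * m + 1)) x := by
    intro x m
    have h := ((lucasVR_hasDeriv (2 * m + 1) x).const_mul ((-1 : ℝ) ^ m)).div_const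
      (2 * (m : ℝ) + 1)
    have hne : (2 * (m : ℝ) + 1) ≠ 0 := by positivity
    have e : (-1 : ℝ) ^ m * (((2 * m + 1 : ℕ) : ℝ) * lucasUR x (2 * m + 1))
        / (2 * (m : ℝ) + 1) = (-1 : ℝ) ^ m * lucasUR x (2 * m + 1) := by
      push_cast
      field_simp
    rw [e] at h
    exact h
  have hderiv : ∀ x : ℝ, HasDerivAt F (wSeqR (1 - x ^ 2 / 2) n) x := by
    intro x
    have hsum : HasDerivAt
        (fun s => ∑ k ∈ Finset.range n,
          (-1 : ℝ) ^ k * lucasVR s (2 * k + 1) / (2 * (k : ℝ) + 1))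
        (∑ k ∈ Finset.range n, (-1 : ℝ) ^ k * lucasUR x (2 * k + 1)) x :=
      HasDerivAt.fun_sum (fun k _ => hterm x k)
    have h := (hsum.const_mul (2 : ℝ)).add (hterm x n)
    rw [show (2 : ℝ) * ∑ k ∈ Finset.range n, (-1 : ℝ) ^ k * lucasUR x (2 * k + 1)
          + (-1 : ℝ) ^ n * lucasUR x (2 * n + 1) = wSeqR (1 - x ^ 2 / 2) n from
      (w_eq_u n x).symm] at h
    exact h
  have hcont : Continuous fun τ : ℝ => wSeqR (1 - τ ^ 2 / 2) n := by
    have e : (fun τ : ℝ => wSeqR (1 - τ ^ 2 / 2) n)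
        = fun τ => 2 * ∑ k ∈ Finset.range n, (-1 : ℝ) ^ k * lucasUR τ (2 * k + 1)
          + (-1 : ℝ) ^ n * lucasUR τ (2 * n + 1) := by
      funext τ; exact w_eq_u n τ
    rw [e]
    exact ((continuous_const.mul (continuous_finset_sum _
      (fun k _ => continuous_const.mul (lucasUR_cont (2 * k + 1))))).add
      (continuous_const.mul (lucasUR_cont (2 * n + 1))))
  have hint := intervalIntegral.integral_eq_sub_of_hasDerivAt
    (f := F) (fun x _ => hderiv x) (hcont.intervalIntegrable 0 t)
  rw [hint]
  have hF0 : F 0 = 0 := by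
    simp [hF, lucasVR_odd_zero]
  rw [hF0]
  ring
end
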